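/- For any finite EG program Γ, the completion of the infinitary program τ₁Γ is satisfied by exactly the same interpretations of the vocabulary of Γ as the set of completed definitions of the predicate symbols occurring in Γ. -/

import Mathlib

namespace EG


/-! ### Relation symbols -/

inductive Rel : Type where
  | req | rne | rlt | rle | rgt | rge

/-- Evaluation of a relation symbol relative to a strict total order `lt`
on the domain (equality is genuine equality of domain elements). -/
def Rel.eval {α : Type} (lt : α → α → Prop) : Rel → α → α → Prop
  | .req, a, b => a = b
  | .rne, a, b => a ≠ b
  | .rlt, a, b => lt a b
  | .rle, a, b => lt a b ∨ a = b
  | .rgt, a, b => lt b a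
  | .rge, a, b => lt b a ∨ a = b

/-! ### Precomputed terms -/

/-- Precomputed terms over a type `C` of symbolic constants:
numerals, symbolic constants, `inf`, `sup`, and applications of a symbolic
constant to a tuple of precomputed terms. -/
inductive Pre (C : Type) : Type where
  | inf
  | sup
  | num (n : ℤ)
  | sym (c : C)
  | app (f : C) (args : List (Pre C))

/-- The assumed total order on precomputed terms: a strict total order with
`inf` least, `sup` greatest, in which numerals are ordered as the integers. -/
structure PreOrderOK {C : Type} (lt : Pre C → Pre C → Prop) : Prop where
  irrefl : ∀ a, ¬ lt a a
  trans : ∀ a b c, lt a b → lt b c → lt a c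
  total : ∀ a b, lt a b ∨ a = b ∨ lt b a
  inf_least : ∀ a, a ≠ Pre.inf → lt Pre.inf a
  sup_greatest : ∀ a, a ≠ Pre.sup → lt a Pre.sup
  num_iff : ∀ m n : ℤ, (lt (Pre.num m) (Pre.num n) ↔ m < n)

/-- Atoms `p(r)` where `r` is a tuple of precomputed terms. -/
abbrev EGAtom (C : Type) := C × List (Pre C)

/-- An interpretation is a set of atoms over precomputed terms. -/
abbrev Interp (C : Type) := Set (EGAtom C)

/-- Valuations: variables (natural numbers) ↦ precomputed terms. -/
abbrev Val (C : Type) := ℕ → Pre C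

/-- Simultaneously update a valuation on a list of variables by a list of values. -/
def updList {C : Type} : Val C → List ℕ → List (Pre C) → Val C
  | v, [], _ => v
  | v, _ :: _, [] => v
  | v, x :: xs, r :: rs => Function.update (updList v xs rs) x r

/-! ### Terms -/

/-- Terms over symbolic constants `C` and operation names `O`. -/
inductive Term (C O : Type) : Type where
  | num (n : ℤ)
  | sym (c : C)
  | var (x : ℕ)
  | inf
  | sup
  | app (f : C) (ts : List (Term C O))
  | op (o : O) (ts : List (Term C O))
  | interval (t₁ t₂ : Term C O)

mutual
/-- The list of variables occurring in a term. -/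
def Term.varList {C O : Type} : Term C O → List ℕ
  | .num _ => []
  | .sym _ => []
  | .var x => [x]
  | .inf => []
  | .sup => []
  | .app _ ts => Term.varListL ts
  | .op _ ts => Term.varListL ts
  | .interval t₁ t₂ => t₁.varList ++ t₂.varList

def Term.varListL {C O : Type} : List (Term C O) → List ℕ
  | [] => []
  | t :: ts => t.varList ++ Term.varListL ts
end

/-- A term (or tuple of terms, etc.) is ground if it contains no variables. -/
def Term.Ground {C O : Type} (t : Term C O) : Prop := t.varList = []

mutual
/-- The set of values of a term under a valuation `v` (for a ground term this
is the set `[t]` of its values, independent of `v`). `opFun` gives the partial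
integer function denoted by each operation name. -/
def Term.val {C O : Type} (opFun : O → List ℤ → Option ℤ) (v : Val C) :
    Term C O → Set (Pre C)
  | .num n => {Pre.num n}
  | .sym c => {Pre.sym c}
  | .var x => {v x}
  | .inf => {Pre.inf}
  | .sup => {Pre.sup}
  | .app f ts => {r | ∃ rs : List (Pre C), Term.vals opFun v ts rs ∧ r = Pre.app f rs}
  | .op o ts => {r | ∃ ks : List ℤ, Term.vals opFun v ts (ks.map Pre.num) ∧
      ∃ m : ℤ, opFun o ks = some m ∧ r = Pre.num m}
  | .interval t₁ t₂ => {r | ∃ k₁ k₂ m : ℤ, Pre.num k₁ ∈ Term.val opFun v t₁ ∧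
      Pre.num k₂ ∈ Term.val opFun v t₂ ∧ k₁ ≤ m ∧ m ≤ k₂ ∧ r = Pre.num m}

/-- `Term.vals opFun v ts rs` : the tuple `rs` of precomputed terms is a tuple of
values of the tuple `ts` of terms (componentwise). -/
def Term.vals {C O : Type} (opFun : O → List ℤ → Option ℤ) (v : Val C) :
    List (Term C O) → List (Pre C) → Prop
  | [], rs => rs = []
  | t :: ts, rs => ∃ r rs', rs = r :: rs' ∧ r ∈ Term.val opFun v t ∧ Term.vals opFun v ts rs'
end

mutual
/-- Embedding of precomputed terms into terms. -/
def Pre.toTerm {C O : Type} : Pre C → Term C O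
  | .inf => .inf
  | .sup => .sup
  | .num n => .num n
  | .sym c => .sym c
  | .app f rs => .app f (Pre.toTermL rs)

def Pre.toTermL {C O : Type} : List (Pre C) → List (Term C O)
  | [] => []
  | r :: rs => Pre.toTerm r :: Pre.toTermL rs
end


/-! ### Formulas with aggregates -/

mutual
/-- Arguments of the extended (aggregate) language. -/
inductive AArg (C O A : Type) : Type where
  | num (n : ℤ)
  | sym (c : C)
  | var (x : ℕ)
  | inf
  | sup
  | app (f : C) (args : List (AArg C O A))
  | agg (a : A) (xs : List ℕ) (F : AFml C O A)

/-- Formulas of the extended (aggregate) first-order language over the domain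
of precomputed terms. -/
inductive AFml (C O A : Type) : Type where
  | atom (p : C) (args : List (AArg C O A))
  | cmp (rel : Rel) (a₁ a₂ : AArg C O A)
  | mem (a : AArg C O A) (t : Term C O)
  | bot
  | impl (F G : AFml C O A)
  | all (x : ℕ) (F : AFml C O A)
end

section Sem
variable {C O A : Type}
variable (opFun : O → List ℤ → Option ℤ)
variable (aggFun : A → Set (List (Pre C)) → Pre C)
variable (lt : Pre C → Pre C → Prop)

mutual
/-- The precomputed term denoted by an argument (joint recursion with `AFml.sat`). -/
def AArg.eval (I : Interp C) : Val C → AArg C O A → Pre C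
  | _, .num n => Pre.num n
  | _, .sym c => Pre.sym c
  | v, .var x => v x
  | _, .inf => Pre.inf
  | _, .sup => Pre.sup
  | v, .app f args => Pre.app f (AArg.evalL I v args)
  | v, .agg a xs F => aggFun a
      {rs : List (Pre C) | rs.length = xs.length ∧ AFml.sat I (updList v xs rs) F}

def AArg.evalL (I : Interp C) : Val C → List (AArg C O A) → List (Pre C)
  | _, [] => []
  | v, a :: as => AArg.eval I v a :: AArg.evalL I v as

/-- Satisfaction of a formula by an interpretation `I` under a valuation `v`. -/
def AFml.sat (I : Interp C) : Val C → AFml C O A → Prop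
  | v, .atom p args => (p, AArg.evalL I v args) ∈ I
  | v, .cmp rel a₁ a₂ => Rel.eval lt rel (AArg.eval I v a₁) (AArg.eval I v a₂)
  | v, .mem a t => AArg.eval I v a ∈ Term.val opFun v t
  | _, .bot => False
  | v, .impl F G => AFml.sat I v F → AFml.sat I v G
  | v, .all x F => ∀ r : Pre C, AFml.sat I (Function.update v x r) F
end

end Sem
/-! ### Infinitary propositional formulas -/

/-- Infinitary propositional formulas over a type `α` of atoms: atoms, `⊥`,
conjunctions and disjunctions of arbitrary families of formulas, implication. -/
inductive IForm (α : Type) : Type 1 where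
  | atom (a : α)
  | bot
  | conj (ι : Type) (f : ι → IForm α)
  | disj (ι : Type) (f : ι → IForm α)
  | impl (F G : IForm α)

namespace IForm

variable {α : Type}

/-- `⊤` as the empty conjunction. -/
def top : IForm α := conj Empty (fun e => e.elim)
def neg (F : IForm α) : IForm α := impl F bot
def and (F G : IForm α) : IForm α := conj Bool (fun b => cond b F G)
def or (F G : IForm α) : IForm α := disj Bool (fun b => cond b F G)
def conjList (l : List (IForm α)) : IForm α := conj (Fin l.length) (fun i => l.get i)

/-- Classical satisfaction of infinitary formulas. -/
def sat (I : Set α) : IForm α → Prop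
  | atom a => a ∈ I
  | bot => False
  | conj _ f => ∀ i, sat I (f i)
  | disj _ f => ∃ i, sat I (f i)
  | impl F G => sat I F → sat I G

open Classical in
/-- The Ferraris reduct of an infinitary formula relative to an interpretation:
every (maximal) subformula not satisfied by `I` is replaced by `⊥`. -/
noncomputable def reduct (I : Set α) : IForm α → IForm α
  | atom a => if a ∈ I then atom a else bot
  | bot => bot
  | conj ι f => conj ι (fun i => reduct I (f i))
  | disj ι f => disj ι (fun i => reduct I (f i))
  | impl F G => if sat I (impl F G) then impl (reduct I F) (reduct I G) else bot

/-- `I` is a stable model of `F` (Ferraris semantics for infinitary formulas):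
`I` is a minimal model of the reduct `F^I`. -/
def stable (I : Set α) (F : IForm α) : Prop :=
  sat I (reduct I F) ∧ ∀ J : Set α, J ⊆ I → sat J (reduct I F) → J = I

/-- Satisfaction in the infinitary logic of here-and-there `HT^∞`, for an
HT-interpretation given by `J ⊆ I` ("here" `J`, "there" `I`). -/
def satHT (J I : Set α) : IForm α → Prop
  | atom a => a ∈ J
  | bot => False
  | conj _ f => ∀ i, satHT J I (f i)
  | disj _ f => ∃ i, satHT J I (f i)
  | impl F G => (satHT J I F → satHT J I G) ∧ (sat I F → sat I G)

/-- Strong equivalence of infinitary formulas, i.e. equivalence in `HT^∞`. -/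
def HTEquiv (F G : IForm α) : Prop :=
  ∀ J I : Set α, J ⊆ I → (satHT J I F ↔ satHT J I G) ∧ (sat I F ↔ sat I G)

mutual
/-- Positive nonnegated atoms of an infinitary formula. -/
def Pnn : IForm α → Set α
  | atom a => {a}
  | bot => ∅
  | conj _ f => ⋃ i, Pnn (f i)
  | disj _ f => ⋃ i, Pnn (f i)
  | impl _ bot => ∅
  | impl G H => Nnn G ∪ Pnn H

/-- Negative nonnegated atoms of an infinitary formula. -/
def Nnn : IForm α → Set α
  | atom _ => ∅
  | bot => ∅
  | conj _ f => ⋃ i, Nnn (f i)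
  | disj _ f => ⋃ i, Nnn (f i)
  | impl _ bot => ∅
  | impl G H => Pnn G ∪ Nnn H
end

end IForm

/-! ### Infinitary programs -/

/-- An infinitary rule `F → A`. -/
structure IRule (α : Type) : Type 1 where
  body : IForm α
  head : α

/-- An infinitary program: a conjunction (represented as a set) of infinitary rules. -/
abbrev IProg (α : Type) := Set (IRule α)

def IRule.toForm {α : Type} (r : IRule α) : IForm α := .impl r.body (.atom r.head)

namespace IProg
variable {α : Type}

/-- `I` satisfies the program (i.e., the conjunction of its rules). -/
def sat (I : Set α) (P : IProg α) : Prop := ∀ r ∈ P, IForm.sat I r.toForm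

/-- `I` is a stable model of the program, i.e., of the conjunction of its rules:
`I` is a minimal model of the reduct of that conjunction. -/
def stable (I : Set α) (P : IProg α) : Prop :=
  (∀ r ∈ P, IForm.sat I (IForm.reduct I r.toForm)) ∧
  ∀ J : Set α, J ⊆ I → (∀ r ∈ P, IForm.sat J (IForm.reduct I r.toForm)) → J = I

/-- `I` is supported by the program. -/
def supported (I : Set α) (P : IProg α) : Prop :=
  ∀ a ∈ I, ∃ r ∈ P, r.head = a ∧ IForm.sat I r.body

/-- `I` satisfies the completion of `P`, with signature (set of atoms) `S`:
the conjunction over all atoms `A ∈ S` of `A ↔ ⋁ (P|_A)`. -/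
def satCompletionOn (S : Set α) (I : Set α) (P : IProg α) : Prop :=
  ∀ a ∈ S, (a ∈ I ↔ ∃ r ∈ P, r.head = a ∧ IForm.sat I r.body)

/-- `B` is a parent of `A` relative to `P` and `I`. -/
def parent (P : IProg α) (I : Set α) (B A : α) : Prop :=
  A ∈ I ∧ B ∈ I ∧ ∃ r ∈ P, r.head = A ∧ IForm.sat I r.body ∧ B ∈ IForm.Pnn r.body

/-- `P` is tight on `I`: there is no infinite sequence of elements of `I` in
which each element is followed by one of its parents. -/
def tightOn (P : IProg α) (I : Set α) : Prop :=
  ¬ ∃ f : ℕ → α, (∀ i, f i ∈ I) ∧ ∀ i, parent P I (f (i + 1)) (f i)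

end IProg
/-! ### Programs -/

/-- A literal: an atom `p(t₁,…,tₙ)` (`pos = true`) or such an atom preceded
by `not` (`pos = false`). -/
structure Lit (C O : Type) : Type where
  pos : Bool
  pred : C
  args : List (Term C O)

/-- A comparison `t₁ ≺ t₂`. -/
structure Comp (C O : Type) : Type where
  rel : Rel
  lhs : Term C O
  rhs : Term C O

/-- An element of the condition of an aggregate expression: a literal or comparison. -/
abbrev CondElem (C O : Type) := Lit C O ⊕ Comp C O

def Lit.varList {C O : Type} (l : Lit C O) : List ℕ := Term.varListL l.args
def Comp.varList {C O : Type} (c : Comp C O) : List ℕ := c.lhs.varList ++ c.rhs.varList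
def CondElem.varList {C O : Type} : CondElem C O → List ℕ :=
  Sum.elim Lit.varList Comp.varList

/-- An aggregate expression `α{t : C} ≺ s`, where `s` is a variable or a
precomputed term. -/
structure AggExpr (C O A : Type) : Type where
  name : A
  ts : List (Term C O)
  cond : List (CondElem C O)
  rel : Rel
  bound : ℕ ⊕ Pre C

def AggExpr.lhsVarList {C O A : Type} (E : AggExpr C O A) : List ℕ :=
  Term.varListL E.ts ++ E.cond.flatMap CondElem.varList

def boundVarList {C : Type} : ℕ ⊕ Pre C → List ℕ
  | .inl x => [x]
  | .inr _ => []

def AggExpr.varList {C O A : Type} (E : AggExpr C O A) : List ℕ :=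
  E.lhsVarList ++ boundVarList E.bound

/-- An aggregate expression is closed if its bound `s` is ground
(i.e., a precomputed term). -/
def AggExpr.ClosedBound {C O A : Type} (E : AggExpr C O A) : Prop :=
  ∃ r : Pre C, E.bound = Sum.inr r

/-- A conjunctive term of a rule body. -/
inductive BElem (C O A : Type) : Type where
  | lit (l : Lit C O)
  | comp (c : Comp C O)
  | agg (E : AggExpr C O A)

def BElem.varList {C O A : Type} : BElem C O A → List ℕ
  | .lit l => l.varList
  | .comp c => c.varList
  | .agg E => E.varList

/-- A body element suitable for the translation `τ`: a ground literal,
a ground comparison, or a closed aggregate expression. -/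
def BElem.ClosedC {C O A : Type} : BElem C O A → Prop
  | .lit l => l.varList = []
  | .comp c => c.varList = []
  | .agg E => E.ClosedBound

/-- The head of a rule. -/
inductive Head (C O : Type) : Type where
  | basic (p : C) (ts : List (Term C O))
  | choice (p : C) (ts : List (Term C O))
  | empty

def Head.varList {C O : Type} : Head C O → List ℕ
  | .basic _ ts => Term.varListL ts
  | .choice _ ts => Term.varListL ts
  | .empty => []

/-- A rule `Head ← Body`. -/
structure Rule (C O A : Type) : Type where
  head : Head C O
  body : List (BElem C O A)

def Rule.varList {C O A : Type} (R : Rule C O A) : List ℕ :=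
  R.head.varList ++ R.body.flatMap BElem.varList

/-- The variables with an occurrence in the rule outside the left-hand sides
`α{t : C}` of aggregate expressions (head, literal and comparison conjuncts,
and bounds of aggregate expressions); these are the global variables. -/
def Rule.globalList {C O A : Type} (R : Rule C O A) : List ℕ :=
  (R.head.varList ++ R.body.flatMap (fun b =>
    match b with
    | .lit l => l.varList
    | .comp c => c.varList
    | .agg E => boundVarList E.bound)).dedup

/-- The local variables of a rule: those occurring in the rule, all of whose
occurrences are inside left-hand sides of aggregate expressions of its body. -/
def Rule.localList {C O A : Type} (R : Rule C O A) : List ℕ :=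
  ((R.body.flatMap (fun b =>
    match b with
    | .agg E => E.lhsVarList
    | _ => [])).dedup).filter (fun x => x ∉ R.globalList)

/-- A rule is closed if all its variables are local. -/
def Rule.Closed {C O A : Type} (R : Rule C O A) : Prop := R.globalList = []

/-! ### Predicate symbol occurrences, vocabulary, dependency graph -/

def Lit.hasPred {C O : Type} (p : C) (n : ℕ) (l : Lit C O) : Prop :=
  l.pred = p ∧ l.args.length = n

def CondElem.hasPred {C O : Type} (p : C) (n : ℕ) : CondElem C O → Prop
  | .inl l => l.hasPred p n
  | .inr _ => False

def AggExpr.hasPred {C O A : Type} (p : C) (n : ℕ) (E : AggExpr C O A) : Prop :=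
  ∃ ce ∈ E.cond, CondElem.hasPred p n ce

/-- The predicate symbol `p/n` occurs in a body element. -/
def BElem.hasPred {C O A : Type} (p : C) (n : ℕ) : BElem C O A → Prop
  | .lit l => l.hasPred p n
  | .comp _ => False
  | .agg E => E.hasPred p n

/-- The predicate symbol `p/n` occurs in a positive literal or in an aggregate
expression (condition (ii′)). -/
def BElem.hasPosOrAggPred {C O A : Type} (p : C) (n : ℕ) : BElem C O A → Prop
  | .lit l => l.pos = true ∧ l.hasPred p n
  | .comp _ => False
  | .agg E => E.hasPred p n

def Head.hasPred {C O : Type} (p : C) (n : ℕ) : Head C O → Prop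
  | .basic q ts => q = p ∧ ts.length = n
  | .choice q ts => q = p ∧ ts.length = n
  | .empty => False

/-- The predicate symbol `p/n` occurs in the rule `R`. -/
def Rule.hasPredSym {C O A : Type} (p : C) (n : ℕ) (R : Rule C O A) : Prop :=
  R.head.hasPred p n ∨ ∃ e ∈ R.body, BElem.hasPred p n e

/-- The vocabulary of a program: all atoms `p(r)` with `r` a tuple of `n`
precomputed terms and `p/n` occurring in the program. -/
def vocab {C O A : Type} (Γ : Set (Rule C O A)) : Set (EGAtom C) :=
  {a | ∃ R ∈ Γ, Rule.hasPredSym a.1 a.2.length R}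

/-- The edge relation of the dependency graph `G_Γ` on predicate symbols. -/
def DepEdge {C O A : Type} (Γ : Set (Rule C O A)) (q p : C × ℕ) : Prop :=
  ∃ R ∈ Γ, R.head.hasPred q.1 q.2 ∧ ∃ e ∈ R.body, BElem.hasPosOrAggPred p.1 p.2 e

/-- A program is tight if its dependency graph is acyclic. -/
def EGTight {C O A : Type} (Γ : Set (Rule C O A)) : Prop :=
  ∀ s : C × ℕ, ¬ Relation.TransGen (DepEdge Γ) s s


/-! ### Embeddings and aggregate-freeness -/

mutual
/-- Embedding of precomputed terms into arguments of the extended language. -/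
def Pre.toAArg {C O A : Type} : Pre C → AArg C O A
  | .inf => .inf
  | .sup => .sup
  | .num n => .num n
  | .sym c => .sym c
  | .app f rs => .app f (Pre.toAArgL rs)

def Pre.toAArgL {C O A : Type} : List (Pre C) → List (AArg C O A)
  | [] => []
  | r :: rs => Pre.toAArg r :: Pre.toAArgL rs
end

mutual
/-- The number of occurrences of aggregate names in an argument;
an argument is aggregate-free iff this is `0`. -/
def AArg.countAgg {C O A : Type} : AArg C O A → ℕ
  | .num _ => 0
  | .sym _ => 0
  | .var _ => 0
  | .inf => 0
  | .sup => 0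
  | .app _ args => AArg.countAggL args
  | .agg _ _ F => F.countAgg + 1

def AArg.countAggL {C O A : Type} : List (AArg C O A) → ℕ
  | [] => 0
  | a :: as => a.countAgg + AArg.countAggL as

def AFml.countAgg {C O A : Type} : AFml C O A → ℕ
  | .atom _ args => AArg.countAggL args
  | .cmp _ a₁ a₂ => a₁.countAgg + a₂.countAgg
  | .mem a _ => a.countAgg
  | .bot => 0
  | .impl F G => F.countAgg + G.countAgg
  | .all _ F => F.countAgg
end

/-- An argument contains no aggregate names. -/
def AArg.AggFree {C O A : Type} (a : AArg C O A) : Prop := a.countAgg = 0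

mutual
/-- An aggregate-free argument, viewed as a term (the `agg` case is junk and
is never relevant for aggregate-free arguments). -/
def AArg.toTerm {C O A : Type} : AArg C O A → Term C O
  | .num n => .num n
  | .sym c => .sym c
  | .var x => .var x
  | .inf => .inf
  | .sup => .sup
  | .app f args => .app f (AArg.toTermL args)
  | .agg _ _ _ => .inf

def AArg.toTermL {C O A : Type} : List (AArg C O A) → List (Term C O)
  | [] => []
  | a :: as => a.toTerm :: AArg.toTermL as
end

/-! ### Abbreviated connectives of the extended first-order language -/

namespace AFml
variable {C O A : Type}

def negF (F : AFml C O A) : AFml C O A := .impl F .bot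
def topF : AFml C O A := negF .bot
def andF (F G : AFml C O A) : AFml C O A := .impl (.impl F (.impl G .bot)) .bot
def orF (F G : AFml C O A) : AFml C O A := .impl (negF F) G
def iffF (F G : AFml C O A) : AFml C O A := andF (.impl F G) (.impl G F)
def exF (x : ℕ) (F : AFml C O A) : AFml C O A := negF (.all x (negF F))
def andList (l : List (AFml C O A)) : AFml C O A := l.foldr andF topF
def orList (l : List (AFml C O A)) : AFml C O A := l.foldr orF .bot
def exList (xs : List ℕ) (F : AFml C O A) : AFml C O A := xs.foldr exF F
def allList (xs : List ℕ) (F : AFml C O A) : AFml C O A := xs.foldr .all F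

end AFml

/-! ### The translation φ (formula representations) -/

/-- A variable index strictly greater than every element of `l`
(used to pick new/fresh variables). -/
def freshVar (l : List ℕ) : ℕ := l.foldr max 0 + 1

/-- The bound `s` of an aggregate expression, as a term. -/
def boundTerm {C O : Type} : ℕ ⊕ Pre C → Term C O
  | .inl x => .var x
  | .inr r => r.toTerm

section Phi
variable {C O A : Type}

/-- `φ` of a literal: `∃X(X ∈ t ∧ p(X))`, resp. `∃X(X ∈ t ∧ ¬p(X))`,
with `X` a tuple of new variables. -/
def phiLit (l : Lit C O) : AFml C O A :=
  let n := freshVar l.varList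
  let ws := (List.range l.args.length).map (· + n)
  AFml.exList ws (AFml.andF
    (AFml.andList ((ws.zip l.args).map (fun q => AFml.mem (AArg.var q.1) q.2)))
    (if l.pos then AFml.atom l.pred (ws.map AArg.var)
     else AFml.negF (AFml.atom l.pred (ws.map AArg.var))))

/-- `φ` of a comparison: `∃X₁X₂(X₁ ∈ t₁ ∧ X₂ ∈ t₂ ∧ X₁ ≺ X₂)`. -/
def phiComp (c : Comp C O) : AFml C O A :=
  let n := freshVar c.varList
  AFml.exF n (AFml.exF (n + 1) (AFml.andF (AFml.mem (AArg.var n) c.lhs)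
    (AFml.andF (AFml.mem (AArg.var (n + 1)) c.rhs)
      (AFml.cmp c.rel (AArg.var n) (AArg.var (n + 1))))))

def phiCondElem : CondElem C O → AFml C O A :=
  Sum.elim phiLit phiComp

/-- `φ` of a conjunction of literals and comparisons. -/
def phiCond (cond : List (CondElem C O)) : AFml C O A :=
  AFml.andList (cond.map phiCondElem)

/-- `φ^X` of an aggregate expression `α{t : C} ≺ s` (with `X = xs` the
variables treated as local):
`∃Y(α{Z | ∃X(Z ∈ t ∧ φC)} ≺ Y ∧ Y ∈ s)`, with `Z`, `Y` new variables. -/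
def phiAgg (xs : List ℕ) (E : AggExpr C O A) : AFml C O A :=
  let n := freshVar (xs ++ E.varList)
  let zs := (List.range E.ts.length).map (· + (n + 1))
  AFml.exF n (AFml.andF
    (AFml.cmp E.rel
      (AArg.agg E.name zs
        (AFml.exList xs (AFml.andF
          (AFml.andList ((zs.zip E.ts).map (fun q => AFml.mem (AArg.var q.1) q.2)))
          (phiCond E.cond))))
      (AArg.var n))
    (AFml.mem (AArg.var n) (boundTerm E.bound)))

/-- `φ^X` of a body element, where `xs` is the list of variables treated as local. -/
def phiBElem (xs : List ℕ) : BElem C O A → AFml C O A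
  | .lit l => phiLit l
  | .comp c => phiComp c
  | .agg E => phiAgg xs E

/-- `φ^X` of a body (a conjunction of literals, comparisons and aggregate
expressions), where `xs` is the list of variables treated as local. -/
def phiBody (xs : List ℕ) (b : List (BElem C O A)) : AFml C O A :=
  AFml.andList (b.map (phiBElem xs))

/-- The formula representation of a constraint `← Body`: `¬ φ^X(Body)`,
where `X` is the list of local variables of the constraint. -/
def phiConstraintRep (R : Rule C O A) : AFml C O A :=
  AFml.negF (phiBody R.localList R.body)

/-- `V ∈ t` for a tuple `V` of variables and a tuple `t` of terms. -/
def memConj (Vs : List ℕ) (ts : List (Term C O)) : AFml C O A :=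
  AFml.andList ((Vs.zip ts).map (fun q => AFml.mem (AArg.var q.1) q.2))

/-- The antecedent `Fᵢ` of the formula representation `Fᵢ → p(V)` of a basic or
choice rule, where `Vs` is the chosen tuple `V` of new variables:
for a basic rule `V ∈ t ∧ φ^X(Body)`, for a choice rule
`V ∈ t ∧ φ^X(Body) ∧ p(V)`, with `X` the local variables of the rule. -/
def ruleAnte (Vs : List ℕ) (R : Rule C O A) : AFml C O A :=
  match R.head with
  | .basic _ ts => AFml.andF (memConj Vs ts) (phiBody R.localList R.body)
  | .choice p ts => AFml.andF (memConj Vs ts)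
      (AFml.andF (phiBody R.localList R.body) (AFml.atom p (Vs.map AArg.var)))
  | .empty => AFml.bot

/-- Does `R` belong to the definition of `p/n` (a basic or choice rule whose
head is of the form `p(t₁,…,tₙ)` or `{p(t₁,…,tₙ)}`)? -/
def definesB [DecidableEq C] (p : C) (n : ℕ) (R : Rule C O A) : Bool :=
  match R.head with
  | .basic q ts => decide (q = p ∧ ts.length = n)
  | .choice q ts => decide (q = p ∧ ts.length = n)
  | .empty => false

/-- The completed definition of the predicate symbol `p/n` in the finite
program `Γ`: `∀V(p(V) ↔ ⋁ᵢ ∃Uᵢ Fᵢ)`, where the `Fᵢ` come from the formula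
representations of the rules defining `p/n`, `V` is a tuple of new variables
chosen in the same way for all `i`, and `Uᵢ` is the list of free variables of
`Fᵢ` not in `V` (i.e., the global variables of the corresponding rule). -/
def completedDef [DecidableEq C] (Γ : List (Rule C O A)) (p : C) (n : ℕ) : AFml C O A :=
  let base := freshVar (Γ.flatMap Rule.varList)
  let Vs := (List.range n).map (· + base)
  AFml.allList Vs (AFml.iffF (AFml.atom p (Vs.map AArg.var))
    (AFml.orList ((Γ.filter (definesB p n)).map
      (fun R => AFml.exList R.globalList (ruleAnte Vs R)))))

end Phi

/-! ### The translation τ (grounding into infinitary formulas) -/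

section Tau
variable {C O A : Type}
variable (opFun : O → List ℤ → Option ℤ)
variable (aggFun : A → Set (List (Pre C)) → Pre C)
variable (lt : Pre C → Pre C → Prop)

/-- `τ` of a (ground instance of a) literal: `⋁_{r ∈ [t]} p(r)`, resp.
`⋁_{r ∈ [t]} ¬p(r)`; variables are evaluated by the valuation `v`. -/
def tauLit (v : Val C) (l : Lit C O) : IForm (EGAtom C) :=
  if l.pos then
    .disj {rs : List (Pre C) // Term.vals opFun v l.args rs}
      (fun rs => .atom (l.pred, rs.val))
  else
    .disj {rs : List (Pre C) // Term.vals opFun v l.args rs}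
      (fun rs => .neg (.atom (l.pred, rs.val)))

open Classical in
/-- `τ` of a (ground instance of a) comparison: `⊤` if the relation holds
between some values of the two terms, `⊥` otherwise. -/
noncomputable def tauComp (v : Val C) (c : Comp C O) : IForm (EGAtom C) :=
  if ∃ r₁ ∈ Term.val opFun v c.lhs, ∃ r₂ ∈ Term.val opFun v c.rhs,
      Rel.eval lt c.rel r₁ r₂
  then .top else .bot

noncomputable def tauCondElem (v : Val C) : CondElem C O → IForm (EGAtom C)
  | .inl l => tauLit opFun v l
  | .inr c => tauComp opFun lt v c

/-- `τ` of a conjunction of (ground instances of) literals and comparisons. -/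
noncomputable def tauCond (v : Val C) (cond : List (CondElem C O)) : IForm (EGAtom C) :=
  IForm.conjList (cond.map (tauCondElem opFun lt v))

/-- The value of the bound `s` of an aggregate expression under a valuation. -/
def boundVal (v : Val C) : ℕ ⊕ Pre C → Pre C
  | .inl x => v x
  | .inr r => r

/-- Tuples of precomputed terms matching the variable list `xs`. -/
def AggTuple (C : Type) (xs : List ℕ) : Type := {rs : List (Pre C) // rs.length = xs.length}

/-- `Δ` justifies the aggregate expression `E` (relative to the valuation `v`
and the list `xs` of its variables): `≺` holds between `α̂([Δ])` and `s`,
where `[Δ]` is the union of the value sets of the instantiated tuples `t`. -/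
def Justifies (v : Val C) (xs : List ℕ) (E : AggExpr C O A)
    (Δ : Set (AggTuple C xs)) : Prop :=
  Rel.eval lt E.rel
    (aggFun E.name
      {q | ∃ rs ∈ Δ, Term.vals opFun (updList v xs rs.val) E.ts q})
    (boundVal v E.bound)

/-- `τ` of a closed aggregate expression `E`, relative to the list `xs` of its
variables: the conjunction, over all subsets `Δ` of the set `A` of tuples of
precomputed terms matching `xs` that do not justify `E`, of the implications
`(⋀_{r∈Δ} τ(C^X_r)) → (⋁_{r∈A∖Δ} τ(C^X_r))`. -/
noncomputable def tauAgg (v : Val C) (xs : List ℕ) (E : AggExpr C O A) :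
    IForm (EGAtom C) :=
  .conj {Δ : Set (AggTuple C xs) // ¬ Justifies opFun aggFun lt v xs E Δ}
    (fun Δ => .impl
      (.conj {rs : AggTuple C xs // rs ∈ Δ.val}
        (fun rs => tauCond opFun lt (updList v xs rs.val.val) E.cond))
      (.disj {rs : AggTuple C xs // rs ∉ Δ.val}
        (fun rs => tauCond opFun lt (updList v xs rs.val.val) E.cond)))

/-- `τ` of a closed aggregate expression, with `X` the list of variables
occurring in it. -/
noncomputable def tauAggE (v : Val C) (E : AggExpr C O A) : IForm (EGAtom C) :=
  tauAgg opFun aggFun lt v (E.varList.dedup) E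

/-- `τ` of a body element of (an instance of) a rule whose list of local
variables is `loc`; in the instance, the variables occurring in an aggregate
expression `E` are the variables of `E` that are local in the rule. -/
noncomputable def tauBElem (v : Val C) (loc : List ℕ) : BElem C O A → IForm (EGAtom C)
  | .lit l => tauLit opFun v l
  | .comp c => tauComp opFun lt v c
  | .agg E => tauAgg opFun aggFun lt v (E.varList.dedup.filter (· ∈ loc)) E

/-- `τ` of the body of (an instance of) a rule with local variable list `loc`. -/
noncomputable def tauBody (v : Val C) (loc : List ℕ) (b : List (BElem C O A)) :
    IForm (EGAtom C) :=
  IForm.conjList (b.map (tauBElem opFun aggFun lt v loc))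

/-- `τ` of (an instance, given by the valuation `v`, of) a rule. -/
noncomputable def tauRule (v : Val C) (R : Rule C O A) : IForm (EGAtom C) :=
  match R.head with
  | .basic p ts => .impl (tauBody opFun aggFun lt v R.localList R.body)
      (.conj {rs : List (Pre C) // Term.vals opFun v ts rs}
        (fun rs => .atom (p, rs.val)))
  | .choice p ts => .impl (tauBody opFun aggFun lt v R.localList R.body)
      (.conj {rs : List (Pre C) // Term.vals opFun v ts rs}
        (fun rs => .or (.atom (p, rs.val)) (.neg (.atom (p, rs.val)))))
  | .empty => .neg (tauBody opFun aggFun lt v R.localList R.body)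

/-- `τΓ`: the conjunction of `τR` over all instances `R` of the rules of `Γ`
(instances given by valuations of the global variables). -/
noncomputable def tauProg (Γ : Set (Rule C O A)) : IForm (EGAtom C) :=
  .conj ({R : Rule C O A // R ∈ Γ} × Val C)
    (fun z => tauRule opFun aggFun lt z.2 z.1.val)

/-- Stable models of an EG program: stable models of `τΓ`. -/
noncomputable def EGStable (I : Interp C) (Γ : Set (Rule C O A)) : Prop :=
  IForm.stable I (tauProg opFun aggFun lt Γ)

/-- The infinitary program `τ₁Γ`: the rules `τ(Body) → p(r)` for all instances
of basic rules of `Γ` and all `r ∈ [t]`, together with the rules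
`τ(Body) ∧ ¬¬p(r) → p(r)` for all instances of choice rules and all `r ∈ [t]`. -/
noncomputable def tau1 (Γ : Set (Rule C O A)) : IProg (EGAtom C) :=
  {ir | ∃ R ∈ Γ, ∃ v : Val C,
    (∃ p ts rs, R.head = Head.basic p ts ∧ Term.vals opFun v ts rs ∧
      ir = ⟨tauBody opFun aggFun lt v R.localList R.body, (p, rs)⟩) ∨
    (∃ p ts rs, R.head = Head.choice p ts ∧ Term.vals opFun v ts rs ∧
      ir = ⟨IForm.and (tauBody opFun aggFun lt v R.localList R.body)
              (IForm.neg (IForm.neg (IForm.atom (p, rs)))), (p, rs)⟩)}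

/-- The infinitary formula `τ₂Γ`: the conjunction of `¬τ(C)` over all
instances `← C` of the constraints of `Γ`. -/
noncomputable def tau2 (Γ : Set (Rule C O A)) : IForm (EGAtom C) :=
  .conj ({R : Rule C O A // R ∈ Γ ∧ R.head = Head.empty} × Val C)
    (fun z => .neg (tauBody opFun aggFun lt z.2 z.1.val.localList z.1.val.body))

/-- `τ` of a closed conjunction of ground literals, ground comparisons and
closed aggregate expressions (each aggregate expression translated relative
to the list of its own variables). -/
noncomputable def tauBElemC (v : Val C) : BElem C O A → IForm (EGAtom C)
  | .lit l => tauLit opFun v l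
  | .comp c => tauComp opFun lt v c
  | .agg E => tauAggE opFun aggFun lt v E

noncomputable def tauBodyC (v : Val C) (b : List (BElem C O A)) : IForm (EGAtom C) :=
  IForm.conjList (b.map (tauBElemC opFun aggFun lt v))

end Tau

/-! ### Completion of an EG program -/

section Completion
variable {C O A : Type}
variable (opFun : O → List ℤ → Option ℤ)
variable (aggFun : A → Set (List (Pre C)) → Pre C)
variable (lt : Pre C → Pre C → Prop)

/-- `I` satisfies the completion of the finite program `Γ`: the completed
definitions of all predicate symbols occurring in `Γ` together with the
universal closures of the formula representations of all constraints of `Γ`. -/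
def SatCompletion [DecidableEq C] (Γ : List (Rule C O A)) (I : Interp C) : Prop :=
  (∀ (p : C) (n : ℕ), (∃ R ∈ Γ, Rule.hasPredSym p n R) →
    ∀ v : Val C, AFml.sat opFun aggFun lt I v (completedDef Γ p n)) ∧
  (∀ R ∈ Γ, R.head = Head.empty →
    ∀ v : Val C, AFml.sat opFun aggFun lt I v (phiConstraintRep R))

end Completion

/-! ### Auxiliary lemmas -/

section Aux

variable {C O A : Type}

/- updList lemmas -/

theorem updList_not_mem {v : Val C} {xs : List ℕ} {rs : List (Pre C)} {x : ℕ}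
    (h : x ∉ xs) : updList v xs rs x = v x := by
  induction xs generalizing v rs with
  | nil => rfl
  | cons y ys ih =>
    cases rs with
    | nil => rfl
    | cons r rs' =>
      simp only [updList]
      rw [Function.update_of_ne (by simp at h; exact h.1)]
      exact ih (by simp at h; exact h.2)

theorem updList_update_comm {v : Val C} {xs : List ℕ} {rs : List (Pre C)} {x : ℕ}
    {r : Pre C} (h : x ∉ xs) :
    updList (Function.update v x r) xs rs = Function.update (updList v xs rs) x r := by
  induction xs generalizing v rs with
  | nil => rfl
  | cons y ys ih =>
    cases rs with
    | nil => rfl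
    | cons r' rs' =>
      simp only [updList]
      rw [ih (by simp at h; exact h.2), Function.update_comm (by simp at h; exact h.1)]

theorem map_updList {v : Val C} {xs : List ℕ} {rs : List (Pre C)}
    (hnd : xs.Nodup) (hlen : rs.length = xs.length) :
    xs.map (updList v xs rs) = rs := by
  induction xs generalizing v rs with
  | nil => cases rs with | nil => rfl | cons r rs' => simp at hlen
  | cons y ys ih =>
    cases rs with
    | nil => simp at hlen
    | cons r rs' =>
      simp only [updList, List.map_cons, Function.update_self]
      have hy : y ∉ ys := (List.nodup_cons.mp hnd).1
      congr 1
      have : ys.map (Function.update (updList v ys rs') y r) = ys.map (updList v ys rs') := by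
        apply List.map_congr_left
        intro a ha
        exact Function.update_of_ne (by rintro rfl; exact hy ha) _ _
      rw [this]
      exact ih (List.nodup_cons.mp hnd).2 (by simpa using hlen)

theorem updList_map_apply {v : Val C} {u : Val C} {xs : List ℕ} {x : ℕ}
    (hnd : xs.Nodup) (hx : x ∈ xs) :
    updList v xs (xs.map u) x = u x := by
  induction xs generalizing v with
  | nil => simp at hx
  | cons y ys ih =>
    simp only [List.map_cons, updList]
    rcases List.mem_cons.mp hx with rfl | hx'
    · exact Function.update_self _ _ _
    · have hy : y ∉ ys := (List.nodup_cons.mp hnd).1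
      rw [Function.update_of_ne (by rintro rfl; exact hy hx')]
      exact ih (List.nodup_cons.mp hnd).2 hx'

theorem updList_mem_indep {u v : Val C} {xs : List ℕ} {rs : List (Pre C)} {x : ℕ}
    (hlen : rs.length = xs.length) (hx : x ∈ xs) :
    updList u xs rs x = updList v xs rs x := by
  induction xs generalizing u v rs with
  | nil => simp at hx
  | cons y ys ih =>
    cases rs with
    | nil => simp at hlen
    | cons r rs' =>
      simp only [updList]
      by_cases hxy : x = y
      · subst hxy; simp
      · rw [Function.update_of_ne hxy, Function.update_of_ne hxy]
        exact ih (by simpa using hlen) ((List.mem_cons.mp hx).resolve_left hxy)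

/- freshVar lemmas -/

theorem le_foldr_max {x : ℕ} {l : List ℕ} (h : x ∈ l) : x ≤ l.foldr max 0 := by
  induction l with
  | nil => simp at h
  | cons y ys ih =>
    rcases List.mem_cons.mp h with rfl | h'
    · exact le_max_left _ _
    · exact le_trans (ih h') (le_max_right _ _)

theorem lt_freshVar {x : ℕ} {l : List ℕ} (h : x ∈ l) : x < freshVar l :=
  Nat.lt_succ_of_le (le_foldr_max h)

/- IForm.sat lemmas -/

theorem IForm.sat_top {I : Set (EGAtom C)} : IForm.sat I (IForm.top) := by
  intro i; exact i.elim

theorem IForm.sat_neg {I : Set (EGAtom C)} {F : IForm (EGAtom C)} :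
    IForm.sat I (IForm.neg F) ↔ ¬ IForm.sat I F := Iff.rfl

theorem IForm.sat_and {I : Set (EGAtom C)} {F G : IForm (EGAtom C)} :
    IForm.sat I (IForm.and F G) ↔ IForm.sat I F ∧ IForm.sat I G := by
  constructor
  · intro h; exact ⟨h true, h false⟩
  · rintro ⟨h1, h2⟩ (_|_) <;> assumption

theorem IForm.sat_or {I : Set (EGAtom C)} {F G : IForm (EGAtom C)} :
    IForm.sat I (IForm.or F G) ↔ IForm.sat I F ∨ IForm.sat I G := by
  constructor
  · rintro ⟨(_|_), h⟩
    · right; exact h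
    · left; exact h
  · rintro (h | h)
    · exact ⟨true, h⟩
    · exact ⟨false, h⟩

theorem IForm.sat_conjList {I : Set (EGAtom C)} {l : List (IForm (EGAtom C))} :
    IForm.sat I (IForm.conjList l) ↔ ∀ F ∈ l, IForm.sat I F := by
  constructor
  · intro h F hF
    rcases List.mem_iff_get.mp hF with ⟨i, rfl⟩
    exact h i
  · intro h i
    exact h _ (l.get_mem i)

end Aux

section AuxSat

variable {C O A : Type}
variable (opFun : O → List ℤ → Option ℤ)
variable (aggFun : A → Set (List (Pre C)) → Pre C)
variable (lt : Pre C → Pre C → Prop)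
variable {I : Interp C}

local notation "sat" => AFml.sat opFun aggFun lt I

theorem sat_bot {v : Val C} : ¬ sat v (AFml.bot (C := C) (O := O) (A := A)) := by
  simp [AFml.sat]

theorem sat_impl {v : Val C} {F G : AFml C O A} :
    sat v (AFml.impl F G) ↔ (sat v F → sat v G) := by
  simp [AFml.sat]

theorem sat_negF {v : Val C} {F : AFml C O A} :
    sat v (AFml.negF F) ↔ ¬ sat v F := by
  simp [AFml.negF, AFml.sat]

theorem sat_andF {v : Val C} {F G : AFml C O A} :
    sat v (AFml.andF F G) ↔ sat v F ∧ sat v G := by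
  simp [AFml.andF, AFml.sat]

theorem sat_orF {v : Val C} {F G : AFml C O A} :
    sat v (AFml.orF F G) ↔ sat v F ∨ sat v G := by
  simp [AFml.orF, AFml.negF, AFml.sat]; tauto

theorem sat_iffF {v : Val C} {F G : AFml C O A} :
    sat v (AFml.iffF F G) ↔ (sat v F ↔ sat v G) := by
  simp [AFml.iffF, sat_andF, sat_impl]; tauto

theorem sat_topF {v : Val C} : sat v (AFml.topF (C := C) (O := O) (A := A)) := by
  rw [AFml.topF, sat_negF]
  exact sat_bot opFun aggFun lt

theorem sat_andList {v : Val C} {l : List (AFml C O A)} :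
    sat v (AFml.andList l) ↔ ∀ F ∈ l, sat v F := by
  induction l with
  | nil =>
    simp only [AFml.andList, List.foldr_nil, List.not_mem_nil, false_implies, implies_true, iff_true]
    exact sat_topF opFun aggFun lt
  | cons F fs ih =>
    simp only [AFml.andList, List.foldr_cons]
    rw [show List.foldr AFml.andF AFml.topF fs = AFml.andList fs from rfl]
    rw [sat_andF, ih]
    simp

theorem sat_orList {v : Val C} {l : List (AFml C O A)} :
    sat v (AFml.orList l) ↔ ∃ F ∈ l, sat v F := by
  induction l with
  | nil =>
    simp only [AFml.orList, List.foldr_nil, List.not_mem_nil, false_and, exists_false, iff_false]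
    exact sat_bot opFun aggFun lt
  | cons F fs ih =>
    simp only [AFml.orList, List.foldr_cons]
    rw [show List.foldr AFml.orF AFml.bot fs = AFml.orList fs from rfl]
    rw [sat_orF, ih]
    simp

theorem sat_exF {v : Val C} {x : ℕ} {F : AFml C O A} :
    sat v (AFml.exF x F) ↔ ∃ r : Pre C, sat (Function.update v x r) F := by
  rw [AFml.exF, sat_negF]
  constructor
  · intro h
    by_contra hc
    push_neg at hc
    exact h (by intro r; rw [sat_negF]; exact hc r)
  · rintro ⟨r, hr⟩ h
    have := h r
    rw [sat_negF] at this
    exact this hr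

theorem sat_all {v : Val C} {x : ℕ} {F : AFml C O A} :
    sat v (AFml.all x F) ↔ ∀ r : Pre C, sat (Function.update v x r) F := by
  simp [AFml.sat]

theorem sat_exList {v : Val C} {xs : List ℕ} {F : AFml C O A} (hnd : xs.Nodup) :
    sat v (AFml.exList xs F) ↔
      ∃ rs : List (Pre C), rs.length = xs.length ∧ sat (updList v xs rs) F := by
  induction xs generalizing v with
  | nil =>
    simp only [AFml.exList, List.foldr_nil]
    constructor
    · intro h; exact ⟨[], rfl, h⟩
    · rintro ⟨rs, hlen, h⟩
      rw [List.length_eq_zero_iff.mp hlen] at h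
      exact h
  | cons x xs ih =>
    have hx : x ∉ xs := (List.nodup_cons.mp hnd).1
    simp only [AFml.exList, List.foldr_cons]
    rw [show List.foldr AFml.exF F xs = AFml.exList xs F from rfl, sat_exF]
    constructor
    · rintro ⟨r, hr⟩
      rcases (ih (List.nodup_cons.mp hnd).2).mp hr with ⟨rs, hlen, hsat⟩
      refine ⟨r :: rs, by simp [hlen], ?_⟩
      rw [show updList v (x :: xs) (r :: rs) =
        Function.update (updList v xs rs) x r from rfl, ← updList_update_comm hx]
      exact hsat
    · rintro ⟨rs, hlen, hsat⟩
      cases rs with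
      | nil => simp at hlen
      | cons r rs' =>
        refine ⟨r, (ih (List.nodup_cons.mp hnd).2).mpr ⟨rs', by simpa using hlen, ?_⟩⟩
        rw [updList_update_comm hx]
        exact hsat

theorem sat_allList {v : Val C} {xs : List ℕ} {F : AFml C O A} (hnd : xs.Nodup) :
    sat v (AFml.allList xs F) ↔
      ∀ rs : List (Pre C), rs.length = xs.length → sat (updList v xs rs) F := by
  induction xs generalizing v with
  | nil =>
    simp only [AFml.allList, List.foldr_nil]
    constructor
    · intro h rs hlen
      rw [List.length_eq_zero_iff.mp hlen]
      exact h
    · intro h; exact h [] rfl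
  | cons x xs ih =>
    have hx : x ∉ xs := (List.nodup_cons.mp hnd).1
    simp only [AFml.allList, List.foldr_cons]
    rw [show List.foldr AFml.all F xs = AFml.allList xs F from rfl, sat_all]
    constructor
    · intro h rs hlen
      cases rs with
      | nil => simp at hlen
      | cons r rs' =>
        have := (ih (List.nodup_cons.mp hnd).2).mp (h r) rs' (by simpa using hlen)
        rw [updList_update_comm hx] at this
        exact this
    · intro h r
      rw [ih (List.nodup_cons.mp hnd).2]
      intro rs hlen
      rw [updList_update_comm hx]
      exact h (r :: rs) (by simp [hlen])

end AuxSat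

section AuxTerm

variable {C O A : Type}
variable (opFun : O → List ℤ → Option ℤ)

theorem mem_varListL {x : ℕ} {ts : List (Term C O)} :
    x ∈ Term.varListL ts ↔ ∃ t ∈ ts, x ∈ t.varList := by
  induction ts with
  | nil => simp [Term.varListL]
  | cons t ts ih => simp [Term.varListL, List.mem_append, ih]

mutual
theorem Term.val_congr (u v : Val C) (t : Term C O)
    (h : ∀ x ∈ t.varList, u x = v x) :
    Term.val opFun u t = Term.val opFun v t := by
  cases t with
  | num n => rfl
  | sym c => rfl
  | inf => rfl
  | sup => rfl
  | var x =>
    simp only [Term.val, h x (by simp [Term.varList])]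
  | app f ts =>
    have h2 := Term.vals_congr u v ts (by intro x hx; exact h x (by simpa [Term.varList] using hx))
    simp only [Term.val, h2]
  | op o ts =>
    have h2 := Term.vals_congr u v ts (by intro x hx; exact h x (by simpa [Term.varList] using hx))
    simp only [Term.val, h2]
  | interval t₁ t₂ =>
    have h1 := Term.val_congr u v t₁
      (by intro x hx; exact h x (by simp [Term.varList, List.mem_append]; left; exact hx))
    have h2 := Term.val_congr u v t₂
      (by intro x hx; exact h x (by simp [Term.varList, List.mem_append]; right; exact hx))
    simp only [Term.val, h1, h2]

theorem Term.vals_congr (u v : Val C) (ts : List (Term C O))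
    (h : ∀ x ∈ Term.varListL ts, u x = v x) :
    Term.vals opFun u ts = Term.vals opFun v ts := by
  cases ts with
  | nil => rfl
  | cons t ts =>
    have h1 := Term.val_congr u v t
      (by intro x hx; exact h x (by simp [Term.varListL, List.mem_append]; left; exact hx))
    have h2 := Term.vals_congr u v ts
      (by intro x hx; exact h x (by simp [Term.varListL, List.mem_append]; right; exact hx))
    funext rs
    simp only [Term.vals, h1, h2]
end

theorem Term.vals_length {v : Val C} {ts : List (Term C O)} {rs : List (Pre C)}
    (h : Term.vals opFun v ts rs) : rs.length = ts.length := by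
  induction ts generalizing rs with
  | nil => rw [h]; rfl
  | cons t ts ih =>
    rcases h with ⟨r, rs', rfl, _, h'⟩
    simp [ih h']

theorem Term.vals_forall₂ {v : Val C} {ts : List (Term C O)} {rs : List (Pre C)} :
    Term.vals opFun v ts rs ↔ List.Forall₂ (fun t r => r ∈ Term.val opFun v t) ts rs := by
  induction ts generalizing rs with
  | nil =>
    cases rs with
    | nil => simp [Term.vals]
    | cons r rs' => simp [Term.vals]
  | cons t ts ih =>
    cases rs with
    | nil => simp [Term.vals]
    | cons r rs' =>
      simp only [Term.vals, List.forall₂_cons]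
      constructor
      · rintro ⟨a, as, heq, h1, h2⟩
        simp only [List.cons.injEq] at heq
        obtain ⟨rfl, rfl⟩ := heq
        exact ⟨h1, ih.mp h2⟩
      · rintro ⟨h1, h2⟩
        exact ⟨r, rs', rfl, h1, ih.mpr h2⟩

mutual
theorem Term.val_toTerm (v : Val C) (r : Pre C) :
    Term.val opFun v (Pre.toTerm (O := O) r) = {r} := by
  cases r with
  | inf => rfl
  | sup => rfl
  | num n => rfl
  | sym c => rfl
  | app f rs =>
    have h := Term.vals_toTermL v rs
    ext q
    simp only [Pre.toTerm, Term.val, h, Set.mem_setOf_eq, Set.mem_singleton_iff]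
    constructor
    · rintro ⟨qs, rfl, rfl⟩; rfl
    · rintro rfl; exact ⟨rs, rfl, rfl⟩

theorem Term.vals_toTermL (v : Val C) (rs : List (Pre C)) :
    Term.vals opFun v (Pre.toTermL (O := O) rs) = (fun q => q = rs) := by
  cases rs with
  | nil => rfl
  | cons r rs' =>
    have h1 := Term.val_toTerm v r
    have h2 := Term.vals_toTermL v rs'
    funext q
    simp only [Pre.toTermL, Term.vals, h1, h2, Set.mem_singleton_iff]
    apply propext
    constructor
    · rintro ⟨a, as, rfl, rfl, rfl⟩; rfl
    · rintro rfl; exact ⟨r, rs', rfl, rfl, rfl⟩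
end

end AuxTerm

section AuxPhi

variable {C O A : Type}
variable (opFun : O → List ℤ → Option ℤ)
variable (aggFun : A → Set (List (Pre C)) → Pre C)
variable (lt : Pre C → Pre C → Prop)
variable {I : Interp C}

local notation "sat" => AFml.sat opFun aggFun lt I

theorem evalL_mapVar {v : Val C} {ws : List ℕ} :
    AArg.evalL opFun aggFun lt I v (ws.map (AArg.var (C := C) (O := O) (A := A))) = ws.map v := by
  induction ws with
  | nil => rfl
  | cons w ws ih => simp [AArg.evalL, AArg.eval, ih]

theorem sat_zipmem {v : Val C} {ws : List ℕ} {ts : List (Term C O)}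
    (hlen : ws.length = ts.length) :
    sat v (AFml.andList (((ws.zip ts)).map fun q =>
        AFml.mem (A := A) (AArg.var q.1) q.2)) ↔
      Term.vals opFun v ts (ws.map v) := by
  induction ws generalizing ts with
  | nil =>
    cases ts with
    | nil => simp [sat_andList, Term.vals]
    | cons t ts => simp at hlen
  | cons w ws ih =>
    cases ts with
    | nil => simp at hlen
    | cons t ts =>
      simp only [List.zip_cons_cons, List.map_cons]
      rw [sat_andList, List.forall_mem_cons, ← sat_andList, ih (by simpa using hlen)]
      simp only [AFml.sat, AArg.eval, Term.vals, List.map_cons]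
      constructor
      · rintro ⟨h1, h2⟩; exact ⟨_, _, rfl, h1, h2⟩
      · rintro ⟨r, rs', heq, h1, h2⟩
        simp only [List.cons.injEq] at heq
        obtain ⟨rfl, rfl⟩ := heq
        exact ⟨h1, h2⟩

theorem sat_memConj {v : Val C} {ws : List ℕ} {ts : List (Term C O)}
    (hlen : ws.length = ts.length) :
    sat v (memConj (A := A) ws ts) ↔ Term.vals opFun v ts (ws.map v) :=
  sat_zipmem opFun aggFun lt hlen

theorem vals_updList_fresh {v : Val C} {ws : List ℕ} {q : List (Pre C)}
    {ts : List (Term C O)} (hnd : ws.Nodup) (hq : q.length = ws.length)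
    (hfresh : ∀ x ∈ Term.varListL ts, x ∉ ws) :
    Term.vals opFun (updList v ws q) ts (ws.map (updList v ws q))
      ↔ Term.vals opFun v ts q := by
  rw [map_updList hnd hq,
    Term.vals_congr opFun _ v ts (fun x hx => updList_not_mem (hfresh x hx))]

theorem sat_atom {v : Val C} {p : C} {args : List (AArg C O A)} :
    sat v (AFml.atom p args) ↔ (p, AArg.evalL opFun aggFun lt I v args) ∈ I :=
  Iff.rfl

theorem sat_phiLit {v : Val C} {l : Lit C O} :
    sat v (phiLit (A := A) l) ↔ ∃ q, Term.vals opFun v l.args q ∧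
      (if l.pos then (l.pred, q) ∈ I else (l.pred, q) ∉ I) := by
  obtain ⟨pos, pred, args⟩ := l
  simp only [phiLit]
  set n0 := freshVar (Lit.varList ⟨pos, pred, args⟩) with hn0
  set ws := (List.range (Lit.args ⟨pos, pred, args⟩).length).map (· + n0) with hws
  have hnd : ws.Nodup := List.nodup_range.map (fun a b h => by omega)
  have hlenws : ws.length = args.length := by simp [hws]
  have hfresh : ∀ x ∈ Term.varListL args, x ∉ ws := by
    intro x hx hmem
    have hxlt : x < n0 := lt_freshVar (by exact hx)
    simp only [hws, List.mem_map, List.mem_range] at hmem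
    omega
  rw [sat_exList opFun aggFun lt hnd]
  have hval : ∀ q : List (Pre C), q.length = ws.length →
      (sat (updList v ws q) (AFml.andList ((ws.zip args).map fun p =>
          AFml.mem (A := A) (AArg.var p.1) p.2)) ↔ Term.vals opFun v args q) := by
    intro q hq
    rw [sat_zipmem opFun aggFun lt (by rw [hlenws]),
      vals_updList_fresh opFun hnd hq hfresh]
  have hatom : ∀ q : List (Pre C), q.length = ws.length →
      (sat (updList v ws q) (AFml.atom pred (ws.map AArg.var)) ↔ (pred, q) ∈ I) := by
    intro q hq
    rw [sat_atom opFun aggFun lt, evalL_mapVar opFun aggFun lt, map_updList hnd hq]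
  cases pos with
  | true =>
    simp only [if_true]
    constructor
    · rintro ⟨q, hq, hsat⟩
      rw [sat_andF] at hsat
      exact ⟨q, (hval q hq).mp hsat.1, (hatom q hq).mp hsat.2⟩
    · rintro ⟨q, hvals, hmem⟩
      have hq : q.length = ws.length := by
        rw [hlenws]; exact Term.vals_length opFun hvals
      exact ⟨q, hq, sat_andF opFun aggFun lt |>.mpr
        ⟨(hval q hq).mpr hvals, (hatom q hq).mpr hmem⟩⟩
  | false =>
    simp only [Bool.false_eq_true, if_false]
    constructor
    · rintro ⟨q, hq, hsat⟩
      rw [sat_andF] at hsat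
      refine ⟨q, (hval q hq).mp hsat.1, ?_⟩
      have h2 := hsat.2
      rw [sat_negF] at h2
      exact fun hin => h2 ((hatom q hq).mpr hin)
    · rintro ⟨q, hvals, hmem⟩
      have hq : q.length = ws.length := by
        rw [hlenws]; exact Term.vals_length opFun hvals
      refine ⟨q, hq, sat_andF opFun aggFun lt |>.mpr ⟨(hval q hq).mpr hvals, ?_⟩⟩
      rw [sat_negF]
      exact fun hin => hmem ((hatom q hq).mp hin)

theorem sat_phiComp {v : Val C} {c : Comp C O} :
    sat v (phiComp (A := A) c) ↔ ∃ r₁ ∈ Term.val opFun v c.lhs,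
      ∃ r₂ ∈ Term.val opFun v c.rhs, Rel.eval lt c.rel r₁ r₂ := by
  set n := freshVar c.varList with hn
  have hl : ∀ (r₁ r₂ : Pre C),
      Term.val opFun (Function.update (Function.update v n r₁) (n+1) r₂) c.lhs
        = Term.val opFun v c.lhs := by
    intro r₁ r₂
    apply Term.val_congr
    intro x hx
    have : x < n := lt_freshVar (by simp [Comp.varList]; left; exact hx)
    rw [Function.update_of_ne (by omega), Function.update_of_ne (by omega)]
  have hr : ∀ (r₁ r₂ : Pre C),
      Term.val opFun (Function.update (Function.update v n r₁) (n+1) r₂) c.rhs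
        = Term.val opFun v c.rhs := by
    intro r₁ r₂
    apply Term.val_congr
    intro x hx
    have : x < n := lt_freshVar (by simp [Comp.varList]; right; exact hx)
    rw [Function.update_of_ne (by omega), Function.update_of_ne (by omega)]
  simp only [phiComp, ← hn, sat_exF, sat_andF]
  constructor
  · rintro ⟨r₁, r₂, h1, h2, h3⟩
    rw [show AFml.sat opFun aggFun lt I _ (AFml.mem (AArg.var n) c.lhs) =
      (AArg.eval opFun aggFun lt I (Function.update (Function.update v n r₁) (n+1) r₂)
        (AArg.var n) ∈ Term.val opFun (Function.update (Function.update v n r₁) (n+1) r₂)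
          c.lhs) from rfl] at h1
    rw [show AFml.sat opFun aggFun lt I _ (AFml.mem (AArg.var (n+1)) c.rhs) =
      (AArg.eval opFun aggFun lt I (Function.update (Function.update v n r₁) (n+1) r₂)
        (AArg.var (n+1)) ∈ Term.val opFun (Function.update (Function.update v n r₁) (n+1) r₂)
          c.rhs) from rfl] at h2
    rw [hl] at h1
    rw [hr] at h2
    simp only [AArg.eval] at h1 h2
    rw [Function.update_of_ne (by omega), Function.update_self] at h1
    rw [Function.update_self] at h2
    refine ⟨_, h1, _, h2, ?_⟩
    simp only [AFml.sat, AArg.eval] at h3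
    rw [Function.update_of_ne (by omega), Function.update_self] at h3
    rw [Function.update_self] at h3
    exact h3
  · rintro ⟨r₁, h1, r₂, h2, h3⟩
    refine ⟨r₁, r₂, ?_, ?_, ?_⟩
    · rw [show AFml.sat opFun aggFun lt I _ (AFml.mem (AArg.var n) c.lhs) =
        (AArg.eval opFun aggFun lt I (Function.update (Function.update v n r₁) (n+1) r₂)
          (AArg.var n) ∈ Term.val opFun (Function.update (Function.update v n r₁) (n+1) r₂)
            c.lhs) from rfl]
      rw [hl]
      simp only [AArg.eval]
      rw [Function.update_of_ne (by omega), Function.update_self]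
      exact h1
    · rw [show AFml.sat opFun aggFun lt I _ (AFml.mem (AArg.var (n+1)) c.rhs) =
        (AArg.eval opFun aggFun lt I (Function.update (Function.update v n r₁) (n+1) r₂)
          (AArg.var (n+1)) ∈ Term.val opFun (Function.update (Function.update v n r₁) (n+1) r₂)
            c.rhs) from rfl]
      rw [hr]
      simp only [AArg.eval]
      rw [Function.update_self]
      exact h2
    · simp only [AFml.sat, AArg.eval]
      rw [Function.update_of_ne (by omega), Function.update_self, Function.update_self]
      exact h3

end AuxPhi

section AuxTau

variable {C O A : Type}
variable (opFun : O → List ℤ → Option ℤ)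
variable (aggFun : A → Set (List (Pre C)) → Pre C)
variable (lt : Pre C → Pre C → Prop)
variable {I : Interp C}

local notation "sat" => AFml.sat opFun aggFun lt I

theorem sat_tauLit {v : Val C} {l : Lit C O} :
    IForm.sat I (tauLit opFun v l) ↔ ∃ q, Term.vals opFun v l.args q ∧
      (if l.pos then (l.pred, q) ∈ I else (l.pred, q) ∉ I) := by
  cases hpos : l.pos
  · simp only [tauLit, hpos, Bool.false_eq_true, if_false, IForm.neg, IForm.sat]
    constructor
    · rintro ⟨⟨q, hq⟩, h⟩; exact ⟨q, hq, h⟩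
    · rintro ⟨q, hq, h⟩; exact ⟨⟨q, hq⟩, h⟩
  · simp only [tauLit, hpos, if_true, IForm.sat]
    constructor
    · rintro ⟨⟨q, hq⟩, h⟩; exact ⟨q, hq, h⟩
    · rintro ⟨q, hq, h⟩; exact ⟨⟨q, hq⟩, h⟩

theorem sat_tauComp {v : Val C} {c : Comp C O} :
    IForm.sat I (tauComp opFun lt v c) ↔ ∃ r₁ ∈ Term.val opFun v c.lhs,
      ∃ r₂ ∈ Term.val opFun v c.rhs, Rel.eval lt c.rel r₁ r₂ := by
  rw [tauComp]
  split
  · next h => exact iff_of_true IForm.sat_top h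
  · next h => exact iff_of_false (by simp [IForm.sat]) h

theorem phi_tau_condElem {v : Val C} {ce : CondElem C O} :
    sat v (phiCondElem (A := A) ce) ↔ IForm.sat I (tauCondElem opFun lt v ce) := by
  cases ce with
  | inl l =>
    rw [show phiCondElem (A := A) (Sum.inl l) = phiLit l from rfl,
      show tauCondElem opFun lt v (Sum.inl l) = tauLit opFun v l from rfl,
      sat_phiLit opFun aggFun lt, sat_tauLit opFun]
  | inr c =>
    rw [show phiCondElem (A := A) (Sum.inr c) = phiComp c from rfl,
      show tauCondElem opFun lt v (Sum.inr c) = tauComp opFun lt v c from rfl,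
      sat_phiComp opFun aggFun lt, sat_tauComp opFun lt]

theorem phi_tau_cond {v : Val C} {cond : List (CondElem C O)} :
    sat v (phiCond (A := A) cond) ↔ IForm.sat I (tauCond opFun lt v cond) := by
  rw [phiCond, tauCond, sat_andList, IForm.sat_conjList]
  constructor
  · intro h F hF
    rcases List.mem_map.mp hF with ⟨ce, hce, rfl⟩
    exact (phi_tau_condElem opFun aggFun lt).mp (h _ (List.mem_map_of_mem hce))
  · intro h F hF
    rcases List.mem_map.mp hF with ⟨ce, hce, rfl⟩
    exact (phi_tau_condElem opFun aggFun lt).mpr (h _ (List.mem_map_of_mem hce))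

theorem tauLit_congr {u v : Val C} {l : Lit C O}
    (h : ∀ x ∈ l.varList, u x = v x) :
    tauLit opFun u l = tauLit opFun v l := by
  have hv : Term.vals opFun u l.args = Term.vals opFun v l.args :=
    Term.vals_congr opFun u v l.args h
  rw [tauLit, tauLit, hv]

theorem tauComp_congr {u v : Val C} {c : Comp C O}
    (h : ∀ x ∈ c.varList, u x = v x) :
    tauComp opFun lt u c = tauComp opFun lt v c := by
  have h1 : Term.val opFun u c.lhs = Term.val opFun v c.lhs :=
    Term.val_congr opFun u v c.lhs
      (fun x hx => h x (by simp [Comp.varList, List.mem_append]; left; exact hx))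
  have h2 : Term.val opFun u c.rhs = Term.val opFun v c.rhs :=
    Term.val_congr opFun u v c.rhs
      (fun x hx => h x (by simp [Comp.varList, List.mem_append]; right; exact hx))
  rw [tauComp, tauComp, h1, h2]

theorem tauCondElem_congr {u v : Val C} {ce : CondElem C O}
    (h : ∀ x ∈ CondElem.varList ce, u x = v x) :
    tauCondElem opFun lt u ce = tauCondElem opFun lt v ce := by
  cases ce with
  | inl l =>
    rw [show tauCondElem opFun lt u (Sum.inl l) = tauLit opFun u l from rfl,
      show tauCondElem opFun lt v (Sum.inl l) = tauLit opFun v l from rfl]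
    exact tauLit_congr opFun h
  | inr c =>
    rw [show tauCondElem opFun lt u (Sum.inr c) = tauComp opFun lt u c from rfl,
      show tauCondElem opFun lt v (Sum.inr c) = tauComp opFun lt v c from rfl]
    exact tauComp_congr opFun lt h

theorem tauCond_congr {u v : Val C} {cond : List (CondElem C O)}
    (h : ∀ ce ∈ cond, ∀ x ∈ CondElem.varList ce, u x = v x) :
    tauCond opFun lt u cond = tauCond opFun lt v cond := by
  rw [tauCond, tauCond]
  congr 1
  exact List.map_congr_left (fun ce hce => tauCondElem_congr opFun lt (h ce hce))

theorem sat_tauAgg {v : Val C} {ys : List ℕ} {E : AggExpr C O A} :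
    IForm.sat I (tauAgg opFun aggFun lt v ys E) ↔
      Justifies opFun aggFun lt v ys E
        {rs | IForm.sat I (tauCond opFun lt (updList v ys rs.val) E.cond)} := by
  set Δstar : Set (AggTuple C ys) :=
    {rs | IForm.sat I (tauCond opFun lt (updList v ys rs.val) E.cond)} with hΔ
  constructor
  · intro h
    by_contra hc
    have h2 := h ⟨Δstar, hc⟩
    obtain ⟨⟨rs, hrs⟩, hsat⟩ := h2 (fun rs => rs.2)
    exact hrs hsat
  · intro hJ Δ hprem
    have hsub : Δ.val ⊆ Δstar := fun rs hrs => hprem ⟨rs, hrs⟩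
    have hne : Δ.val ≠ Δstar := fun he => Δ.2 (he ▸ hJ)
    obtain ⟨rs, hrs1, hrs2⟩ : ∃ rs, rs ∈ Δstar ∧ rs ∉ Δ.val := by
      by_contra hc
      push_neg at hc
      exact hne (Set.Subset.antisymm hsub hc)
    exact ⟨⟨rs, hrs2⟩, hrs1⟩

theorem val_boundTerm {v₁ v : Val C} {b : ℕ ⊕ Pre C}
    (h : ∀ x, b = Sum.inl x → v₁ x = v x) :
    Term.val opFun v₁ (boundTerm (O := O) b) = {boundVal v b} := by
  cases b with
  | inl x =>
    rw [show boundTerm (O := O) (Sum.inl x : ℕ ⊕ Pre C) = Term.var x from rfl,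
      show boundVal v (Sum.inl x : ℕ ⊕ Pre C) = v x from rfl,
      show Term.val opFun v₁ (Term.var x : Term C O) = {v₁ x} from rfl, h x rfl]
  | inr r =>
    rw [show boundTerm (O := O) (Sum.inr r : ℕ ⊕ Pre C) = Pre.toTerm r from rfl,
      show boundVal v (Sum.inr r : ℕ ⊕ Pre C) = r from rfl]
    exact Term.val_toTerm opFun v₁ r

theorem ts_sub_varList {E : AggExpr C O A} {x : ℕ}
    (hx : x ∈ Term.varListL E.ts) : x ∈ E.varList := by
  simp only [AggExpr.varList, AggExpr.lhsVarList, List.mem_append]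
  left; left; exact hx

theorem cond_sub_varList {E : AggExpr C O A} {ce : CondElem C O} {x : ℕ}
    (hce : ce ∈ E.cond) (hx : x ∈ CondElem.varList ce) : x ∈ E.varList := by
  simp only [AggExpr.varList, AggExpr.lhsVarList, List.mem_append]
  left; right
  exact List.mem_flatMap.mpr ⟨ce, hce, hx⟩

theorem bound_sub_varList {E : AggExpr C O A} {x : ℕ}
    (h : E.bound = Sum.inl x) : x ∈ E.varList := by
  simp only [AggExpr.varList, List.mem_append]
  right
  rw [h]
  simp [boundVarList]

theorem phi_tau_agg {v : Val C} {xs : List ℕ} {E : AggExpr C O A} (hnd : xs.Nodup) :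
    sat v (phiAgg xs E) ↔
      IForm.sat I (tauAgg opFun aggFun lt v (E.varList.dedup.filter (· ∈ xs)) E) := by
  simp only [phiAgg]
  set ys := E.varList.dedup.filter (· ∈ xs) with hys
  have hysnd : ys.Nodup := (E.varList.nodup_dedup).filter _
  have hyssub : ∀ x, x ∈ ys ↔ x ∈ E.varList ∧ x ∈ xs := by
    intro x
    simp [hys, List.mem_filter, List.mem_dedup]
  set n := freshVar (xs ++ E.varList) with hn
  have hxlt : ∀ x ∈ xs, x < n := fun x hx => lt_freshVar (List.mem_append_left _ hx)
  have hElt : ∀ x ∈ E.varList, x < n := fun x hx => lt_freshVar (List.mem_append_right _ hx)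
  set zs := (List.range E.ts.length).map (· + (n+1)) with hzs
  have hzsnd : zs.Nodup := List.nodup_range.map (fun a b h => by omega)
  have hzslen : zs.length = E.ts.length := by simp [hzs]
  have hzsge : ∀ z ∈ zs, n + 1 ≤ z := by
    intro z hz
    simp only [hzs, List.mem_map, List.mem_range] at hz
    obtain ⟨a, _, rfl⟩ := hz
    omega
  set FIN := AFml.exList xs (AFml.andF
    (AFml.andList ((zs.zip E.ts).map (fun q => AFml.mem (A := A) (AArg.var q.1) q.2)))
    (phiCond E.cond)) with hFIN
  set Δstar : Set (AggTuple C ys) :=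
    {rs | IForm.sat I (tauCond opFun lt (updList v ys rs.val) E.cond)} with hΔ
  set T : Set (List (Pre C)) :=
    {q | ∃ rs ∈ Δstar, Term.vals opFun (updList v ys rs.val) E.ts q} with hT
  have hset : ∀ r : Pre C,
      {q : List (Pre C) | q.length = zs.length ∧
        AFml.sat opFun aggFun lt I (updList (Function.update v n r) zs q) FIN} = T := by
    intro r
    ext q
    simp only [Set.mem_setOf_eq, hT]
    constructor
    · rintro ⟨hq, hsat⟩
      rw [hFIN, sat_exList opFun aggFun lt hnd] at hsat
      obtain ⟨ls, hls, hsat⟩ := hsat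
      rw [sat_andF] at hsat
      obtain ⟨h1, h2⟩ := hsat
      set w := updList (Function.update v n r) zs q with hw
      set u := updList w xs ls with hu
      have hzmap : zs.map u = q := by
        have hstep : ∀ z ∈ zs, u z = w z := by
          intro z hz
          apply updList_not_mem
          intro hzx
          have := hxlt z hzx
          have := hzsge z hz
          omega
        calc zs.map u = zs.map w := List.map_congr_left hstep
          _ = q := map_updList hzsnd hq
      rw [sat_zipmem opFun aggFun lt hzslen] at h1
      rw [hzmap] at h1
      rw [phi_tau_cond opFun aggFun lt] at h2
      set rs0 : List (Pre C) := ys.map u with hrs0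
      have hrs0len : rs0.length = ys.length := by simp [hrs0]
      set u' := updList v ys rs0 with hu'
      have hagree : ∀ x ∈ E.varList, u x = u' x := by
        intro x hxE
        by_cases hxy : x ∈ ys
        · exact (updList_map_apply hysnd hxy).symm
        · have hxxs : x ∉ xs := fun hxxs => hxy ((hyssub x).mpr ⟨hxE, hxxs⟩)
          have e1 : u x = w x := updList_not_mem hxxs
          have e2 : w x = v x := by
            rw [hw, updList_not_mem (fun hz => by
              have := hzsge x hz; have := hElt x hxE; omega)]
            exact Function.update_of_ne (by have := hElt x hxE; omega) _ _
          have e3 : u' x = v x := updList_not_mem hxy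
          rw [e1, e2, e3]
      refine ⟨⟨rs0, hrs0len⟩, ?_, ?_⟩
      · show IForm.sat I (tauCond opFun lt (updList v ys rs0) E.cond)
        rw [← hu', ← tauCond_congr opFun lt
          (fun ce hce x hx => hagree x (cond_sub_varList hce hx))]
        exact h2
      · show Term.vals opFun (updList v ys rs0) E.ts q
        rw [← hu',
          ← Term.vals_congr opFun u u' E.ts (fun x hx => hagree x (ts_sub_varList hx))]
        exact h1
    · rintro ⟨⟨rs0, hrs0len⟩, hcond, hvals⟩
      have hq : q.length = zs.length := by
        rw [hzslen]
        exact Term.vals_length opFun hvals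
      set u' := updList v ys rs0 with hu'
      set ls := xs.map u' with hls
      set w := updList (Function.update v n r) zs q with hw
      set u := updList w xs ls with hu
      have hagree : ∀ x ∈ E.varList, u x = u' x := by
        intro x hxE
        by_cases hxxs : x ∈ xs
        · rw [hu, hls]
          exact updList_map_apply hnd hxxs
        · have hxy : x ∉ ys := fun hxy => hxxs ((hyssub x).mp hxy).2
          have e1 : u x = w x := updList_not_mem hxxs
          have e2 : w x = v x := by
            rw [hw, updList_not_mem (fun hz => by
              have := hzsge x hz; have := hElt x hxE; omega)]
            exact Function.update_of_ne (by have := hElt x hxE; omega) _ _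
          have e3 : u' x = v x := updList_not_mem hxy
          rw [e1, e2, e3]
      have hzmap : zs.map u = q := by
        have hstep : ∀ z ∈ zs, u z = w z := by
          intro z hz
          apply updList_not_mem
          intro hzx
          have := hxlt z hzx
          have := hzsge z hz
          omega
        calc zs.map u = zs.map w := List.map_congr_left hstep
          _ = q := map_updList hzsnd hq
      refine ⟨hq, ?_⟩
      rw [hFIN, sat_exList opFun aggFun lt hnd]
      refine ⟨ls, by simp [hls], ?_⟩
      rw [sat_andF]
      constructor
      · rw [sat_zipmem opFun aggFun lt hzslen, hzmap,
          Term.vals_congr opFun u u' E.ts (fun x hx => hagree x (ts_sub_varList hx))]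
        exact hvals
      · rw [phi_tau_cond opFun aggFun lt,
          tauCond_congr opFun lt (fun ce hce x hx => hagree x (cond_sub_varList hce hx))]
        exact hcond
  have hbound : ∀ r : Pre C,
      Term.val opFun (Function.update v n r) (boundTerm (O := O) E.bound)
        = {boundVal v E.bound} := by
    intro r
    apply val_boundTerm
    intro x hx
    apply Function.update_of_ne
    have := hElt x (bound_sub_varList hx)
    omega
  rw [sat_exF opFun aggFun lt, sat_tauAgg opFun aggFun lt]
  have hstep : ∀ r : Pre C,
      AFml.sat opFun aggFun lt I (Function.update v n r)
        (AFml.andF (AFml.cmp E.rel (AArg.agg E.name zs FIN) (AArg.var n))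
          (AFml.mem (AArg.var n) (boundTerm E.bound)))
      ↔ (Rel.eval lt E.rel (aggFun E.name T) r ∧ r = boundVal v E.bound) := by
    intro r
    rw [sat_andF]
    constructor
    · rintro ⟨h1, h2⟩
      constructor
      · have e : AFml.sat opFun aggFun lt I (Function.update v n r)
            (AFml.cmp E.rel (AArg.agg E.name zs FIN) (AArg.var n))
            ↔ Rel.eval lt E.rel
              (aggFun E.name {q | q.length = zs.length ∧
                AFml.sat opFun aggFun lt I (updList (Function.update v n r) zs q) FIN})
              (Function.update v n r n) := Iff.rfl
        rw [e, hset r, Function.update_self] at h1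
        exact h1
      · have e : AFml.sat opFun aggFun lt I (Function.update v n r)
            (AFml.mem (AArg.var n) (boundTerm (O := O) E.bound))
            ↔ Function.update v n r n ∈
              Term.val opFun (Function.update v n r) (boundTerm (O := O) E.bound) := Iff.rfl
        rw [e, hbound r, Function.update_self] at h2
        exact h2
    · rintro ⟨h1, h2⟩
      constructor
      · have e : AFml.sat opFun aggFun lt I (Function.update v n r)
            (AFml.cmp E.rel (AArg.agg E.name zs FIN) (AArg.var n))
            ↔ Rel.eval lt E.rel
              (aggFun E.name {q | q.length = zs.length ∧
                AFml.sat opFun aggFun lt I (updList (Function.update v n r) zs q) FIN})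
              (Function.update v n r n) := Iff.rfl
        rw [e, hset r, Function.update_self]
        exact h1
      · have e : AFml.sat opFun aggFun lt I (Function.update v n r)
            (AFml.mem (AArg.var n) (boundTerm (O := O) E.bound))
            ↔ Function.update v n r n ∈
              Term.val opFun (Function.update v n r) (boundTerm (O := O) E.bound) := Iff.rfl
        rw [e, hbound r, Function.update_self]
        exact h2
  unfold Justifies
  constructor
  · rintro ⟨r, hr⟩
    obtain ⟨h1, rfl⟩ := (hstep r).mp hr
    exact h1
  · intro h
    exact ⟨boundVal v E.bound, (hstep _).mpr ⟨h, rfl⟩⟩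

theorem phi_tau_belem {v : Val C} {loc : List ℕ} {b : BElem C O A} (hnd : loc.Nodup) :
    sat v (phiBElem loc b) ↔ IForm.sat I (tauBElem opFun aggFun lt v loc b) := by
  cases b with
  | lit l =>
    rw [show phiBElem loc (BElem.lit l) = phiLit l from rfl,
      show tauBElem opFun aggFun lt v loc (BElem.lit l) = tauLit opFun v l from rfl,
      sat_phiLit opFun aggFun lt, sat_tauLit opFun]
  | comp c =>
    rw [show phiBElem loc (BElem.comp c) = phiComp c from rfl,
      show tauBElem opFun aggFun lt v loc (BElem.comp c) = tauComp opFun lt v c from rfl,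
      sat_phiComp opFun aggFun lt, sat_tauComp opFun lt]
  | agg E =>
    rw [show phiBElem loc (BElem.agg E) = phiAgg loc E from rfl,
      show tauBElem opFun aggFun lt v loc (BElem.agg E)
        = tauAgg opFun aggFun lt v (E.varList.dedup.filter (· ∈ loc)) E from rfl]
    exact phi_tau_agg opFun aggFun lt hnd

theorem phi_tau_body {v : Val C} {loc : List ℕ} {b : List (BElem C O A)} (hnd : loc.Nodup) :
    sat v (phiBody loc b) ↔ IForm.sat I (tauBody opFun aggFun lt v loc b) := by
  rw [phiBody, tauBody, sat_andList, IForm.sat_conjList]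
  constructor
  · intro h F hF
    rcases List.mem_map.mp hF with ⟨e, he, rfl⟩
    exact (phi_tau_belem opFun aggFun lt hnd).mp (h _ (List.mem_map_of_mem he))
  · intro h F hF
    rcases List.mem_map.mp hF with ⟨e, he, rfl⟩
    exact (phi_tau_belem opFun aggFun lt hnd).mpr (h _ (List.mem_map_of_mem he))

theorem tauAgg_congr {u v : Val C} {ys : List ℕ} {E : AggExpr C O A}
    (h : ∀ x ∈ E.varList, x ∉ ys → u x = v x)
    (hb : boundVal u E.bound = boundVal v E.bound) :
    tauAgg opFun aggFun lt u ys E = tauAgg opFun aggFun lt v ys E := by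
  have hupd : ∀ rs : AggTuple C ys, ∀ x ∈ E.varList,
      updList u ys rs.val x = updList v ys rs.val x := by
    intro rs x hx
    by_cases hxy : x ∈ ys
    · exact updList_mem_indep rs.2 hxy
    · rw [updList_not_mem hxy, updList_not_mem hxy]
      exact h x hx hxy
  have hcond : ∀ rs : AggTuple C ys,
      tauCond opFun lt (updList u ys rs.val) E.cond
        = tauCond opFun lt (updList v ys rs.val) E.cond :=
    fun rs => tauCond_congr opFun lt
      (fun ce hce x hx => hupd rs x (cond_sub_varList hce hx))
  have hvals : ∀ rs : AggTuple C ys,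
      Term.vals opFun (updList u ys rs.val) E.ts
        = Term.vals opFun (updList v ys rs.val) E.ts :=
    fun rs => Term.vals_congr opFun _ _ _ (fun x hx => hupd rs x (ts_sub_varList hx))
  have hJ : Justifies opFun aggFun lt u ys E = Justifies opFun aggFun lt v ys E := by
    funext Δ
    unfold Justifies
    have hseteq : {q | ∃ rs ∈ Δ, Term.vals opFun (updList u ys rs.val) E.ts q}
        = {q | ∃ rs ∈ Δ, Term.vals opFun (updList v ys rs.val) E.ts q} := by
      ext q
      constructor
      · rintro ⟨rs, h1, h2⟩
        exact ⟨rs, h1, hvals rs ▸ h2⟩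
      · rintro ⟨rs, h1, h2⟩
        exact ⟨rs, h1, (hvals rs).symm ▸ h2⟩
    rw [hb, hseteq]
  unfold tauAgg
  rw [hJ]
  congr 1
  funext Δ
  congr 1
  · congr 1
    funext rs
    exact hcond rs.val
  · congr 1
    funext rs
    exact hcond rs.val

/- rule bookkeeping -/

theorem glob_nodup (R : Rule C O A) : R.globalList.Nodup := List.nodup_dedup _

theorem loc_nodup (R : Rule C O A) : R.localList.Nodup :=
  (List.nodup_dedup _).filter _

theorem mem_globalList {R : Rule C O A} {x : ℕ} :
    x ∈ R.globalList ↔ x ∈ R.head.varList ∨ ∃ b ∈ R.body,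
      x ∈ (match b with
        | .lit l => l.varList
        | .comp c => c.varList
        | .agg E => boundVarList E.bound) := by
  simp [Rule.globalList, List.mem_dedup, List.mem_append, List.mem_flatMap]

theorem head_sub_glob {R : Rule C O A} {x : ℕ} (h : x ∈ R.head.varList) :
    x ∈ R.globalList := mem_globalList.mpr (Or.inl h)

theorem lit_sub_glob {R : Rule C O A} {l : Lit C O} {x : ℕ}
    (hb : BElem.lit l ∈ R.body) (h : x ∈ l.varList) : x ∈ R.globalList :=
  mem_globalList.mpr (Or.inr ⟨BElem.lit l, hb, h⟩)

theorem comp_sub_glob {R : Rule C O A} {c : Comp C O} {x : ℕ}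
    (hb : BElem.comp c ∈ R.body) (h : x ∈ c.varList) : x ∈ R.globalList :=
  mem_globalList.mpr (Or.inr ⟨BElem.comp c, hb, h⟩)

theorem aggbound_sub_glob {R : Rule C O A} {E : AggExpr C O A} {x : ℕ}
    (hb : BElem.agg E ∈ R.body) (h : x ∈ boundVarList E.bound) : x ∈ R.globalList :=
  mem_globalList.mpr (Or.inr ⟨BElem.agg E, hb, h⟩)

theorem agg_nonloc_glob {R : Rule C O A} {E : AggExpr C O A} {x : ℕ}
    (hb : BElem.agg E ∈ R.body) (hx : x ∈ E.varList) (hnl : x ∉ R.localList) :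
    x ∈ R.globalList := by
  rcases List.mem_append.mp (by simpa [AggExpr.varList] using hx) with hlhs | hbnd
  · by_contra hg
    apply hnl
    rw [Rule.localList, List.mem_filter]
    refine ⟨List.mem_dedup.mpr (List.mem_flatMap.mpr ⟨BElem.agg E, hb, hlhs⟩), by simpa⟩
  · exact aggbound_sub_glob hb hbnd

theorem glob_sub_varList {R : Rule C O A} {x : ℕ} (h : x ∈ R.globalList) :
    x ∈ R.varList := by
  rcases mem_globalList.mp h with hh | ⟨b, hb, hx⟩
  · exact List.mem_append.mpr (Or.inl hh)
  · refine List.mem_append.mpr (Or.inr (List.mem_flatMap.mpr ⟨b, hb, ?_⟩))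
    cases b with
    | lit l => exact hx
    | comp c => exact hx
    | agg E =>
      show x ∈ E.varList
      exact List.mem_append.mpr (Or.inr hx)

theorem tauBody_congr {u w : Val C} {R : Rule C O A}
    (h : ∀ x ∈ R.globalList, u x = w x) :
    tauBody opFun aggFun lt u R.localList R.body
      = tauBody opFun aggFun lt w R.localList R.body := by
  unfold tauBody
  congr 1
  apply List.map_congr_left
  intro b hb
  cases b with
  | lit l =>
    show tauLit opFun u l = tauLit opFun w l
    exact tauLit_congr opFun (fun x hx => h x (lit_sub_glob hb hx))
  | comp c =>
    show tauComp opFun lt u c = tauComp opFun lt w c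
    exact tauComp_congr opFun lt (fun x hx => h x (comp_sub_glob hb hx))
  | agg E =>
    show tauAgg opFun aggFun lt u (E.varList.dedup.filter (· ∈ R.localList)) E
      = tauAgg opFun aggFun lt w (E.varList.dedup.filter (· ∈ R.localList)) E
    apply tauAgg_congr
    · intro x hx hxy
      apply h
      apply agg_nonloc_glob hb hx
      intro hloc
      exact hxy (by
        rw [List.mem_filter]
        exact ⟨List.mem_dedup.mpr hx, by simpa⟩)
    · cases hbnd : E.bound with
      | inl x =>
        show u x = w x
        exact h x (aggbound_sub_glob hb (by rw [hbnd]; simp [boundVarList]))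
      | inr r => rfl

theorem bridge [DecidableEq C] {Γ : List (Rule C O A)} {p : C} {rs : List (Pre C)} {n : ℕ}
    (hrslen : rs.length = n) (v : Val C) (base : ℕ)
    (hbase : ∀ R ∈ Γ, ∀ x ∈ R.varList, x < base) :
    (∃ ir ∈ tau1 opFun aggFun lt {R | R ∈ Γ}, ir.head = (p, rs) ∧ IForm.sat I ir.body)
      ↔ ∃ F ∈ (Γ.filter (definesB p n)).map
          (fun R => AFml.exList R.globalList
            (ruleAnte ((List.range n).map (· + base)) R)),
        AFml.sat opFun aggFun lt I (updList v ((List.range n).map (· + base)) rs) F := by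
  set Vs := (List.range n).map (· + base) with hVsdef
  have hVsnd : Vs.Nodup := List.nodup_range.map (fun a b h => by omega)
  have hVslen : Vs.length = n := by simp [hVsdef]
  have hVsge : ∀ V ∈ Vs, base ≤ V := by
    intro V hV
    simp only [hVsdef, List.mem_map, List.mem_range] at hV
    obtain ⟨a, _, rfl⟩ := hV
    omega
  set w := updList v Vs rs with hw
  have hwVs : Vs.map w = rs := map_updList hVsnd (by rw [hVslen, hrslen])
  have hVsfree : ∀ R ∈ Γ, ∀ gs' : List (Pre C),
      Vs.map (updList w R.globalList gs') = rs := by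
    intro R hR gs'
    rw [List.map_congr_left (fun V hV => updList_not_mem (fun hVg => by
      have h1 := hbase R hR V (glob_sub_varList hVg)
      have h2 := hVsge V hV
      omega)), hwVs]
  constructor
  · rintro ⟨ir, hir, hhead, hbody⟩
    obtain ⟨R, hRΓ, v₀, hcase⟩ := hir
    have hRmem : R ∈ Γ := hRΓ
    have hglobnd := glob_nodup R
    rcases hcase with ⟨q, ts, rs', hh, hvals, rfl⟩ | ⟨q, ts, rs', hh, hvals, rfl⟩
    -- basic case
    · have h1 : (q, rs') = (p, rs) := hhead
      injection h1 with e1 e2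
      rw [e1] at hh
      rw [e2] at hvals
      have hts : ts.length = n := by
        rw [← hrslen]
        exact (Term.vals_length opFun hvals).symm
      have hdb : definesB p n R = true := by
        unfold definesB
        rw [hh]
        simp [hts]
      refine ⟨_, List.mem_map_of_mem (List.mem_filter.mpr ⟨hRmem, hdb⟩), ?_⟩
      rw [sat_exList opFun aggFun lt hglobnd]
      refine ⟨R.globalList.map v₀, by simp, ?_⟩
      have hug : ∀ x ∈ R.globalList,
          updList w R.globalList (R.globalList.map v₀) x = v₀ x :=
        fun x hx => updList_map_apply hglobnd hx
      have hVsmapu : Vs.map (updList w R.globalList (R.globalList.map v₀)) = rs :=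
        hVsfree R hRmem _
      simp only [ruleAnte, hh]
      rw [sat_andF]
      constructor
      · rw [sat_memConj opFun aggFun lt (by rw [hVslen, hts]), hVsmapu,
          Term.vals_congr opFun _ v₀ ts (fun x hx => hug x (head_sub_glob (by
            rw [hh]; exact hx)))]
        exact hvals
      · rw [phi_tau_body opFun aggFun lt (loc_nodup R),
          tauBody_congr opFun aggFun lt hug]
        exact hbody
    -- choice case
    · have h1 : (q, rs') = (p, rs) := hhead
      injection h1 with e1 e2
      rw [e1] at hh
      rw [e2] at hvals
      rw [IForm.sat_and] at hbody
      rw [e1, e2] at hbody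
      obtain ⟨hb1, hb2⟩ := hbody
      have hpI : (p, rs) ∈ I := by
        by_contra hc
        exact hb2 (fun h => hc h)
      have hts : ts.length = n := by
        rw [← hrslen]
        exact (Term.vals_length opFun hvals).symm
      have hdb : definesB p n R = true := by
        unfold definesB
        rw [hh]
        simp [hts]
      refine ⟨_, List.mem_map_of_mem (List.mem_filter.mpr ⟨hRmem, hdb⟩), ?_⟩
      rw [sat_exList opFun aggFun lt hglobnd]
      refine ⟨R.globalList.map v₀, by simp, ?_⟩
      have hug : ∀ x ∈ R.globalList,
          updList w R.globalList (R.globalList.map v₀) x = v₀ x :=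
        fun x hx => updList_map_apply hglobnd hx
      have hVsmapu : Vs.map (updList w R.globalList (R.globalList.map v₀)) = rs :=
        hVsfree R hRmem _
      simp only [ruleAnte, hh]
      rw [sat_andF]
      constructor
      · rw [sat_memConj opFun aggFun lt (by rw [hVslen, hts]), hVsmapu,
          Term.vals_congr opFun _ v₀ ts (fun x hx => hug x (head_sub_glob (by
            rw [hh]; exact hx)))]
        exact hvals
      · rw [sat_andF]
        constructor
        · rw [phi_tau_body opFun aggFun lt (loc_nodup R),
            tauBody_congr opFun aggFun lt hug]
          exact hb1
        · rw [sat_atom opFun aggFun lt, evalL_mapVar opFun aggFun lt, hVsmapu]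
          exact hpI
  · rintro ⟨F, hF, hsat⟩
    obtain ⟨R, hRf, rfl⟩ := List.mem_map.mp hF
    have hRmem : R ∈ Γ := (List.mem_filter.mp hRf).1
    have hdb := (List.mem_filter.mp hRf).2
    rw [sat_exList opFun aggFun lt (glob_nodup R)] at hsat
    obtain ⟨gs, hgs, hsat⟩ := hsat
    have hVsmapu : Vs.map (updList w R.globalList gs) = rs := hVsfree R hRmem gs
    cases hhead : R.head with
    | basic q ts =>
      have hdb' : q = p ∧ ts.length = n := by
        unfold definesB at hdb
        rw [hhead] at hdb
        simpa using hdb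
      obtain ⟨hqp, hts⟩ := hdb'
      rw [hqp] at hhead
      simp only [ruleAnte, hhead] at hsat
      rw [sat_andF] at hsat
      obtain ⟨h1, h2⟩ := hsat
      rw [sat_memConj opFun aggFun lt (by rw [hVslen, hts]), hVsmapu] at h1
      rw [phi_tau_body opFun aggFun lt (loc_nodup R)] at h2
      exact ⟨⟨tauBody opFun aggFun lt (updList w R.globalList gs) R.localList R.body,
          (p, rs)⟩,
        ⟨R, hRmem, updList w R.globalList gs, Or.inl ⟨p, ts, rs, hhead, h1, rfl⟩⟩,
        rfl, h2⟩
    | choice q ts =>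
      have hdb' : q = p ∧ ts.length = n := by
        unfold definesB at hdb
        rw [hhead] at hdb
        simpa using hdb
      obtain ⟨hqp, hts⟩ := hdb'
      rw [hqp] at hhead
      simp only [ruleAnte, hhead] at hsat
      rw [sat_andF] at hsat
      obtain ⟨h1, h23⟩ := hsat
      rw [sat_andF] at h23
      obtain ⟨h2, h3⟩ := h23
      rw [sat_memConj opFun aggFun lt (by rw [hVslen, hts]), hVsmapu] at h1
      rw [phi_tau_body opFun aggFun lt (loc_nodup R)] at h2
      rw [sat_atom opFun aggFun lt, evalL_mapVar opFun aggFun lt, hVsmapu] at h3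
      refine ⟨⟨IForm.and (tauBody opFun aggFun lt (updList w R.globalList gs)
          R.localList R.body)
          (IForm.neg (IForm.neg (IForm.atom (p, rs)))), (p, rs)⟩,
        ⟨R, hRmem, updList w R.globalList gs, Or.inr ⟨p, ts, rs, hhead, h1, rfl⟩⟩,
        rfl, ?_⟩
      rw [IForm.sat_and]
      exact ⟨h2, fun hn => hn h3⟩
    | empty =>
      exact absurd hdb (by unfold definesB; rw [hhead]; simp)

end AuxTau

/-- Lemma 5: for any finite EG program `Γ`, the completion of
the infinitary program `τ₁Γ` (with the vocabulary of `Γ` as signature) is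
satisfied by the same interpretations of the vocabulary of `Γ` as the set of
completed definitions of the predicate symbols occurring in `Γ`. -/
theorem lemma_5 {C O A : Type} [DecidableEq C]
    (opFun : O → List ℤ → Option ℤ)
    (aggFun : A → Set (List (Pre C)) → Pre C)
    (lt : Pre C → Pre C → Prop) (hlt : PreOrderOK lt)
    (Γ : List (Rule C O A)) (I : Interp C) (hI : I ⊆ vocab {R | R ∈ Γ}) :
    IProg.satCompletionOn (vocab {R | R ∈ Γ}) I (tau1 opFun aggFun lt {R | R ∈ Γ}) ↔
      ∀ (p : C) (n : ℕ), (∃ R ∈ Γ, Rule.hasPredSym p n R) →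
        ∀ v : Val C, AFml.sat opFun aggFun lt I v (completedDef Γ p n) := by
  have hbase : ∀ R ∈ Γ, ∀ x ∈ R.varList, x < freshVar (Γ.flatMap Rule.varList) := by
    intro R hR x hx
    exact lt_freshVar (List.mem_flatMap.mpr ⟨R, hR, hx⟩)
  constructor
  · intro hcomp p n hocc v
    simp only [completedDef]
    have hVsnd : ((List.range n).map (· + freshVar (Γ.flatMap Rule.varList))).Nodup :=
      List.nodup_range.map (fun a b h => by omega)
    rw [sat_allList opFun aggFun lt hVsnd]
    intro rs hlen
    have hrslen : rs.length = n := by simpa using hlen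
    rw [sat_iffF, sat_atom opFun aggFun lt, evalL_mapVar opFun aggFun lt,
      map_updList hVsnd hlen, sat_orList]
    have hmem : ((p, rs) : EGAtom C) ∈ vocab {R | R ∈ Γ} := by
      obtain ⟨R, hR, hpred⟩ := hocc
      refine ⟨R, hR, ?_⟩
      show Rule.hasPredSym p rs.length R
      rw [hrslen]
      exact hpred
    exact (hcomp (p, rs) hmem).trans
      (bridge opFun aggFun lt hrslen v (freshVar (Γ.flatMap Rule.varList)) hbase)
  · intro hdef a ha
    obtain ⟨p, rs⟩ := a
    obtain ⟨R0, hR0, hpred⟩ := ha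
    have h := hdef p rs.length ⟨R0, hR0, hpred⟩ (fun _ => Pre.inf)
    simp only [completedDef] at h
    have hVsnd : ((List.range rs.length).map
        (· + freshVar (Γ.flatMap Rule.varList))).Nodup :=
      List.nodup_range.map (fun a b h => by omega)
    rw [sat_allList opFun aggFun lt hVsnd] at h
    have h2 := h rs (by simp)
    rw [sat_iffF, sat_atom opFun aggFun lt, evalL_mapVar opFun aggFun lt,
      map_updList hVsnd (by simp), sat_orList] at h2
    exact h2.trans
      (bridge opFun aggFun lt rfl (fun _ => Pre.inf)
        (freshVar (Γ.flatMap Rule.varList)) hbase).symm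

end EG
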